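/- arXiv:2004.12680 — 3 statements merged into one kernel-verified Lean document; each statement's English description precedes it below -/
import Mathlib

section
/- For every m ∈ ℕ, every δ ∈ (0,1), and every probability distribution μ on ℕ, with probability at least 1 − δ over an i.i.d. sample X = (X_1,...,X_m) ~ μ^m, the empirical measure μ̂_m satisfies ‖μ̂_m − μ‖_TV ≤ Φ_m(μ̂_m) + 3·√(log(2/δ)/(2m)). -/
set_option maxHeartbeats 1000000


open scoped BigOperators

/-- The empirical measure induced by a sample `x` of size `m`:
`μ̂_m(i) = (1/m) ∑_t 1{x_t = i}`. -/
noncomputable def empMeas (m : ℕ) (x : Fin m → ℕ) (i : ℕ) : ℝ :=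
  ((Finset.univ.filter (fun t => x t = i)).card : ℝ) / m

/-- Total variation distance `(1/2) ∑_i |μ(i) - ν(i)|`. -/
noncomputable def tvDist (μ ν : ℕ → ℝ) : ℝ := (1 / 2) * ∑' i, |μ i - ν i|

/-- `Φ_m(ν) = (1/√m) ∑_j √(ν j)`. -/
noncomputable def Phi (m : ℕ) (ν : ℕ → ℝ) : ℝ :=
  (1 / Real.sqrt m) * ∑' j, Real.sqrt (ν j)

/-- `μ` is a probability distribution on ℕ. -/
def IsProb (μ : ℕ → ℝ) : Prop := (∀ i, 0 ≤ μ i) ∧ ∑' i, μ i = 1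

/-- Probability of the event `A` under the i.i.d. product `μ^m`. -/
noncomputable def probOf (μ : ℕ → ℝ) (m : ℕ) (A : Set (Fin m → ℕ)) : ℝ :=
  ∑' x : Fin m → ℕ, Set.indicator A (fun y => ∏ t, μ (y t)) x

/-- Expectation of `f` under the i.i.d. product `μ^m`. -/
noncomputable def expect (μ : ℕ → ℝ) (m : ℕ) (f : (Fin m → ℕ) → ℝ) : ℝ :=
  ∑' x : Fin m → ℕ, (∏ t, μ (x t)) * f x

/-- Empirical Rademacher complexity of the class of all boolean functions on ℕ,
conditional on the sample `x`:
`R̂_m(x) = E_σ [ sup_{f : ℕ → {0,1}} (1/m) ∑_t σ_t f(x_t) ]`,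
with `σ` uniform on `{-1,1}^m`. -/
noncomputable def empRad (m : ℕ) (x : Fin m → ℕ) : ℝ :=
  (1 / 2 ^ m) * ∑ σ : Fin m → Bool,
    sSup (Set.range (fun f : ℕ → Bool =>
      (1 / (m : ℝ)) * ∑ t, (if σ t then (1 : ℝ) else -1) * (if f (x t) then (1 : ℝ) else 0)))

/-- `Λ_m(μ) = ∑_{j : μ(j) < 1/m} μ(j) + (1/(2√m)) ∑_{j : μ(j) ≥ 1/m} √(μ(j))`. -/
noncomputable def Lam (m : ℕ) (μ : ℕ → ℝ) : ℝ :=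
  (∑' j, Set.indicator {j | μ j < 1 / (m : ℝ)} μ j)
    + (1 / (2 * Real.sqrt m)) *
      ∑' j, Set.indicator {j | 1 / (m : ℝ) ≤ μ j} (fun j => Real.sqrt (μ j)) j

/-- The half-norm `‖ν‖_{1/2} = (∑_i √(ν i))²`. -/
noncomputable def hfnrm (ν : ℕ → ℝ) : ℝ := (∑' i, Real.sqrt (ν i)) ^ 2

/-- `T_μ(η)` with respect to a non-increasing rearrangement `π` of `μ`:
the least `t` such that the tail mass beyond the `t` largest atoms is `< η`
(ranks are 0-indexed). -/
noncomputable def truncT (μ : ℕ → ℝ) (π : ℕ ≃ ℕ) (η : ℝ) : ℕ :=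
  sInf {t : ℕ | ∑' i, μ (π (i + t)) < η}

/-- The truncation `μ[η]`: keep only the `T_μ(η)` largest atoms of `μ`
(as ranked by the non-increasing rearrangement `π`). -/
noncomputable def trunc (μ : ℕ → ℝ) (π : ℕ ≃ ℕ) (η : ℝ) (i : ℕ) : ℝ :=
  Set.indicator {i | π.symm i < truncT μ π η} μ i

/-! ### Auxiliary development -/


noncomputable def Wt (μ : ℕ → ℝ) (m : ℕ) (x : Fin m → ℕ) : ℝ := ∏ t, μ (x t)

lemma expect_eq (μ : ℕ → ℝ) (m : ℕ) (f : (Fin m → ℕ) → ℝ) :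
    expect μ m f = ∑' x, Wt μ m x * f x := rfl

variable {μ : ℕ → ℝ}

lemma IsProb.summable (hμ : IsProb μ) : Summable μ := by
  by_contra h
  have := tsum_eq_zero_of_not_summable h
  rw [hμ.2] at this; norm_num at this

lemma Wt_nonneg (hμ : IsProb μ) (m : ℕ) (x : Fin m → ℕ) : 0 ≤ Wt μ m x :=
  Finset.prod_nonneg fun t _ => hμ.1 _

lemma Wt_cons (m : ℕ) (v : ℕ) (x : Fin m → ℕ) :
    Wt μ (m + 1) (Fin.cons v x) = μ v * Wt μ m x := by
  rw [Wt, Fin.prod_univ_succ]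
  simp [Wt]

lemma summable_Wt (hμ : IsProb μ) (m : ℕ) : Summable (Wt μ m) := by
  induction m with
  | zero => exact Summable.of_finite
  | succ n ih =>
    have h : Summable (fun p : ℕ × (Fin n → ℕ) => μ p.1 * Wt μ n p.2) :=
      Summable.mul_of_nonneg hμ.summable ih hμ.1 (fun x => Wt_nonneg hμ n x)
    rw [← (Fin.consEquiv (fun _ : Fin (n+1) => ℕ)).summable_iff (f := Wt μ (n+1))]
    have heq : (Wt μ (n+1)) ∘ ⇑(Fin.consEquiv (fun _ : Fin (n+1) => ℕ))
        = fun p : ℕ × (Fin n → ℕ) => μ p.1 * Wt μ n p.2 := by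
      ext p
      exact Wt_cons n p.1 p.2
    rw [heq]
    exact h

lemma tsum_Wt (hμ : IsProb μ) (m : ℕ) : ∑' x, Wt μ m x = 1 := by
  induction m with
  | zero =>
    rw [tsum_eq_single (default : Fin 0 → ℕ) (fun b hb => absurd (Subsingleton.elim b default) hb)]
    simp [Wt]
  | succ n ih =>
    have h : Summable (fun p : ℕ × (Fin n → ℕ) => μ p.1 * Wt μ n p.2) :=
      Summable.mul_of_nonneg hμ.summable (summable_Wt hμ n) hμ.1 (fun x => Wt_nonneg hμ n x)
    have h1 : ∑' x, Wt μ (n+1) x = ∑' p : ℕ × (Fin n → ℕ), μ p.1 * Wt μ n p.2 := by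
      rw [← (Fin.consEquiv (fun _ : Fin (n+1) => ℕ)).tsum_eq (Wt μ (n+1))]
      exact tsum_congr fun p => Wt_cons n p.1 p.2
    have h2 : ∀ v : ℕ, Summable (fun x : Fin n → ℕ => μ v * Wt μ n x) :=
      fun v => (summable_Wt hμ n).mul_left _
    rw [h1, Summable.tsum_prod' h h2]
    simp_rw [tsum_mul_left, ih, mul_one, hμ.2]

/-- Bounded functions. -/
def Bdd {m : ℕ} (f : (Fin m → ℕ) → ℝ) (C : ℝ) : Prop := ∀ x, |f x| ≤ C

lemma summable_wt_mul (hμ : IsProb μ) {m : ℕ} {f : (Fin m → ℕ) → ℝ} {C : ℝ}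
    (hf : Bdd f C) : Summable (fun x => Wt μ m x * f x) := by
  apply Summable.of_abs
  apply Summable.of_nonneg_of_le (fun x => abs_nonneg _) (fun x => ?_)
    ((summable_Wt hμ m).mul_right C)
  rw [abs_mul, abs_of_nonneg (Wt_nonneg hμ m x)]
  exact mul_le_mul_of_nonneg_left (hf x) (Wt_nonneg hμ m x)

lemma expect_const (hμ : IsProb μ) (m : ℕ) (c : ℝ) : expect μ m (fun _ => c) = c := by
  rw [expect_eq, tsum_mul_right, tsum_Wt hμ m, one_mul]

lemma expect_mono (hμ : IsProb μ) {m : ℕ} {f g : (Fin m → ℕ) → ℝ} {C C' : ℝ}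
    (hf : Bdd f C) (hg : Bdd g C') (h : ∀ x, f x ≤ g x) : expect μ m f ≤ expect μ m g :=
  Summable.tsum_le_tsum (fun x => mul_le_mul_of_nonneg_left (h x) (Wt_nonneg hμ m x))
    (summable_wt_mul hμ hf) (summable_wt_mul hμ hg)

lemma abs_tsum_le {ι : Type*} {g : ι → ℝ} (hg : Summable g) :
    |∑' x, g x| ≤ ∑' x, |g x| := by
  rw [abs_le]
  constructor
  · have := Summable.tsum_le_tsum (fun i => neg_abs_le (g i)) hg.abs.neg hg
    rwa [tsum_neg] at this
  · exact Summable.tsum_le_tsum (fun i => le_abs_self _) hg hg.abs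

lemma expect_abs_le (hμ : IsProb μ) {m : ℕ} {f : (Fin m → ℕ) → ℝ} {C : ℝ}
    (hf : Bdd f C) : |expect μ m f| ≤ C := by
  have h1 : |expect μ m f| ≤ ∑' x, |Wt μ m x * f x| :=
    abs_tsum_le (summable_wt_mul hμ hf)
  refine h1.trans ?_
  have h2 : ∑' x, |Wt μ m x * f x| ≤ ∑' x, Wt μ m x * C := by
    apply Summable.tsum_le_tsum _ (summable_wt_mul hμ hf).abs ((summable_Wt hμ m).mul_right C)
    intro x
    rw [abs_mul, abs_of_nonneg (Wt_nonneg hμ m x)]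
    exact mul_le_mul_of_nonneg_left (hf x) (Wt_nonneg hμ m x)
  refine h2.trans ?_
  rw [tsum_mul_right, tsum_Wt hμ m, one_mul]

lemma expect_sub (hμ : IsProb μ) {m : ℕ} {f g : (Fin m → ℕ) → ℝ} {C C' : ℝ}
    (hf : Bdd f C) (hg : Bdd g C') :
    expect μ m (fun x => f x - g x) = expect μ m f - expect μ m g := by
  simp_rw [expect_eq, mul_sub]
  exact Summable.tsum_sub (summable_wt_mul hμ hf) (summable_wt_mul hμ hg)

/-- Key recursion (outer order). -/
lemma expect_succ (hμ : IsProb μ) {m : ℕ} {f : (Fin (m+1) → ℕ) → ℝ} {C : ℝ} (hf : Bdd f C) :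
    expect μ (m+1) f = ∑' v, μ v * expect μ m (fun x => f (Fin.cons v x)) := by
  have hsum : Summable (fun p : ℕ × (Fin m → ℕ) => μ p.1 * Wt μ m p.2 * f (Fin.cons p.1 p.2)) := by
    apply Summable.of_abs
    apply Summable.of_nonneg_of_le (fun x => abs_nonneg _) (fun p => ?_)
      ((Summable.mul_of_nonneg hμ.summable (summable_Wt hμ m) hμ.1
        (fun x => Wt_nonneg hμ m x)).mul_right C)
    rw [abs_mul, abs_of_nonneg (mul_nonneg (hμ.1 _) (Wt_nonneg hμ m _))]
    exact mul_le_mul_of_nonneg_left (hf _) (mul_nonneg (hμ.1 _) (Wt_nonneg hμ m _))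
  have h1 : expect μ (m+1) f
      = ∑' p : ℕ × (Fin m → ℕ), μ p.1 * Wt μ m p.2 * f (Fin.cons p.1 p.2) := by
    rw [expect_eq, ← (Fin.consEquiv (fun _ : Fin (m+1) => ℕ)).tsum_eq (fun x => Wt μ (m+1) x * f x)]
    exact tsum_congr fun p => by rw [show ((Fin.consEquiv (fun _ : Fin (m+1) => ℕ)) p) = Fin.cons p.1 p.2 from rfl, Wt_cons]
  have h2 : ∀ v : ℕ, Summable (fun x : Fin m → ℕ => μ v * Wt μ m x * f (Fin.cons v x)) := by
    intro v
    have : (fun x : Fin m → ℕ => μ v * Wt μ m x * f (Fin.cons v x))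
        = (fun x : Fin m → ℕ => μ v * (Wt μ m x * f (Fin.cons v x))) := by ext x; ring
    rw [this]
    exact (summable_wt_mul hμ (fun x => hf _)).mul_left _
  rw [h1, Summable.tsum_prod' hsum h2]
  apply tsum_congr; intro v
  rw [expect_eq, ← Summable.tsum_mul_left (μ v) (summable_wt_mul hμ (fun x => hf _))]
  apply tsum_congr; intro x; ring



/-! ### Part 2: Hoeffding's lemma -/

lemma hoeff_core {p : ℝ} (hp0 : 0 ≤ p) (hp1 : p ≤ 1) (s : ℝ) :
    1 - p + p * Real.exp s ≤ Real.exp (p * s + s ^ 2 / 8) := by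
  set D : ℝ → ℝ := fun t => 1 - p + p * Real.exp t with hDdef
  have hD : ∀ t, 0 < D t := by
    intro t
    show 0 < 1 - p + p * Real.exp t
    rcases eq_or_lt_of_le hp0 with h | h
    · simp [← h]
    · have h1 := Real.exp_pos t
      nlinarith
  set g : ℝ → ℝ := fun t => p + t / 4 - p * Real.exp t / D t with hgdef
  set φ : ℝ → ℝ := fun t => p * t + t ^ 2 / 8 - Real.log (D t) with hφdef
  have hDd : ∀ t, HasDerivAt D (p * Real.exp t) t := by
    intro t
    exact ((Real.hasDerivAt_exp t).const_mul p).const_add (1 - p)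
  have hφ' : ∀ t, HasDerivAt φ (g t) t := by
    intro t
    have hlog : HasDerivAt (fun t => Real.log (D t)) (p * Real.exp t / D t) t :=
      (hDd t).log (hD t).ne'
    have h1 : HasDerivAt (fun t : ℝ => p * t + t ^ 2 / 8) (p + t * 2 / 8) t := by
      have := ((hasDerivAt_id t).const_mul p).add ((hasDerivAt_pow 2 t).div_const 8)
      refine this.congr_deriv ?_
      simp
      ring
    have := h1.sub hlog
    refine this.congr_deriv ?_
    show _ = p + t / 4 - p * Real.exp t / D t
    ring
  have hφ'' : ∀ t, HasDerivAt g (1 / 4 - p * Real.exp t * (1 - p) / (D t) ^ 2) t := by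
    intro t
    have hc : HasDerivAt (fun t => p * Real.exp t) (p * Real.exp t) t :=
      (Real.hasDerivAt_exp t).const_mul p
    have hq : HasDerivAt (fun t => p * Real.exp t / D t)
        ((p * Real.exp t * D t - p * Real.exp t * (p * Real.exp t)) / (D t) ^ 2) t :=
      hc.div (hDd t) (hD t).ne'
    have h1 : HasDerivAt (fun t : ℝ => p + t / 4) (1 / 4) t := by
      simpa using (hasDerivAt_id t).div_const (4 : ℝ) |>.const_add p
    have := h1.sub hq
    refine this.congr_deriv ?_
    have hDt := (hD t).ne'
    have hDt' : D t = 1 - p + p * Real.exp t := rfl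
    rw [hDt']
    ring
  have hgmono : Monotone g :=
    monotone_of_deriv_nonneg (fun t => (hφ'' t).differentiableAt) (by
      intro t
      rw [(hφ'' t).deriv]
      have hDt : D t = 1 - p + p * Real.exp t := rfl
      have h2 : 4 * (p * Real.exp t * (1 - p)) ≤ (D t) ^ 2 := by
        rw [hDt]
        nlinarith [sq_nonneg ((1 - p) - p * Real.exp t), Real.exp_pos t]
      have h3 : p * Real.exp t * (1 - p) / (D t) ^ 2 ≤ 1 / 4 := by
        rw [div_le_div_iff₀ (pow_pos (hD t) 2) (by norm_num : (0:ℝ) < 4)]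
        linarith
      linarith)
  have hg0 : g 0 = 0 := by
    simp [hgdef, hDdef, Real.exp_zero]
  have hφcont : Differentiable ℝ φ := fun t => (hφ' t).differentiableAt
  have hmono : MonotoneOn φ (Set.Ici 0) := by
    apply monotoneOn_of_deriv_nonneg (convex_Ici 0) hφcont.continuous.continuousOn
      (hφcont.differentiableOn)
    intro t ht
    rw [interior_Ici] at ht
    rw [(hφ' t).deriv]
    rw [← hg0]
    exact hgmono (le_of_lt ht)
  have hanti : AntitoneOn φ (Set.Iic 0) := by
    apply antitoneOn_of_deriv_nonpos (convex_Iic 0) hφcont.continuous.continuousOn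
      (hφcont.differentiableOn)
    intro t ht
    rw [interior_Iic] at ht
    rw [(hφ' t).deriv, ← hg0]
    exact hgmono (le_of_lt ht)
  have hφ0 : φ 0 = 0 := by simp [hφdef, hDdef]
  have hφs : 0 ≤ φ s := by
    rcases le_total s 0 with h | h
    · rw [← hφ0]; exact hanti h (le_refl (0:ℝ)) h
    · rw [← hφ0]; exact hmono (le_refl (0:ℝ)) h h
  have hlog : Real.log (D s) ≤ p * s + s ^ 2 / 8 := by
    simp only [hφdef] at hφs; linarith
  calc D s = Real.exp (Real.log (D s)) := (Real.exp_log (hD s)).symm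
    _ ≤ Real.exp (p * s + s ^ 2 / 8) := Real.exp_le_exp.mpr hlog

section WH
variable {μ : ℕ → ℝ}

lemma summable_mu_mul (hμ : IsProb μ) {h : ℕ → ℝ} {C : ℝ}
    (hh : ∀ v, |h v| ≤ C) : Summable (fun v => μ v * h v) := by
  apply Summable.of_abs
  apply Summable.of_nonneg_of_le (fun v => abs_nonneg _) (fun v => ?_)
    (hμ.summable.mul_right C)
  rw [abs_mul, abs_of_nonneg (hμ.1 v)]
  exact mul_le_mul_of_nonneg_left (hh v) (hμ.1 v)

lemma hoeff_weighted (hμ : IsProb μ) {Y : ℕ → ℝ} {a b : ℝ} (l : ℝ)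
    (hY1 : ∀ v, a ≤ Y v) (hY2 : ∀ v, Y v ≤ b) (hmean : ∑' v, μ v * Y v = 0) :
    ∑' v, μ v * Real.exp (l * Y v) ≤ Real.exp (l ^ 2 * (b - a) ^ 2 / 8) := by
  have hYb : ∀ v, |Y v| ≤ |a| + |b| := by
    intro v
    rw [abs_le]
    constructor
    · have := neg_abs_le a; have := hY1 v; have := abs_nonneg b; linarith
    · have := le_abs_self b; have := hY2 v; have := abs_nonneg a; linarith
  have hsumY : Summable (fun v => μ v * Y v) := summable_mu_mul hμ hYb
  have ha0 : a ≤ 0 := by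
    have h1 : ∑' v, μ v * a ≤ ∑' v, μ v * Y v :=
      Summable.tsum_le_tsum (fun v => mul_le_mul_of_nonneg_left (hY1 v) (hμ.1 v))
        (hμ.summable.mul_right a) hsumY
    rwa [tsum_mul_right, hμ.2, one_mul, hmean] at h1
  have hb0 : 0 ≤ b := by
    have h1 : ∑' v, μ v * Y v ≤ ∑' v, μ v * b :=
      Summable.tsum_le_tsum (fun v => mul_le_mul_of_nonneg_left (hY2 v) (hμ.1 v))
        hsumY (hμ.summable.mul_right b)
    rwa [tsum_mul_right, hμ.2, one_mul, hmean] at h1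
  by_cases hba : b - a ≤ 0
  · have hA : a = 0 := le_antisymm ha0 (by linarith)
    have hB : b = 0 := le_antisymm (by linarith) hb0
    have hY0 : ∀ v, Y v = 0 := fun v =>
      le_antisymm (hB ▸ hY2 v) (hA ▸ hY1 v)
    have : ∑' v, μ v * Real.exp (l * Y v) = 1 := by
      simp_rw [hY0, mul_zero, Real.exp_zero, mul_one]; exact hμ.2
    rw [this]
    exact Real.one_le_exp (by positivity)
  push_neg at hba
  set E1 := Real.exp (l * a) with hE1
  set E2 := Real.exp (l * b) with hE2
  have hS1 : ∑' v, μ v * (b - Y v) = b := by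
    simp_rw [mul_sub]
    rw [Summable.tsum_sub (hμ.summable.mul_right b) hsumY, tsum_mul_right, hμ.2, one_mul, hmean, sub_zero]
  have hS2 : ∑' v, μ v * (Y v - a) = -a := by
    simp_rw [mul_sub]
    rw [Summable.tsum_sub hsumY (hμ.summable.mul_right a), tsum_mul_right, hμ.2, one_mul, hmean, zero_sub]
  have key : ∀ v, Real.exp (l * Y v)
      ≤ ((b - Y v) * E1 + (Y v - a) * E2) / (b - a) := by
    intro v
    have hθ : (0:ℝ) ≤ (b - Y v) / (b - a) := div_nonneg (by linarith [hY2 v]) (by linarith)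
    have hη : (0:ℝ) ≤ (Y v - a) / (b - a) := div_nonneg (by linarith [hY1 v]) (by linarith)
    have hsum : (b - Y v) / (b - a) + (Y v - a) / (b - a) = 1 := by
      field_simp
      ring
    have hcx := convexOn_exp.2 (Set.mem_univ (l * a)) (Set.mem_univ (l * b)) hθ hη hsum
    simp only [smul_eq_mul] at hcx
    have harg : (b - Y v) / (b - a) * (l * a) + (Y v - a) / (b - a) * (l * b) = l * Y v := by
      field_simp
      try ring
    rw [harg] at hcx
    refine hcx.trans (le_of_eq ?_)
    field_simp
    rw [hE1, hE2, mul_comm l a, mul_comm l b]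
  have hpt : ∀ v, μ v * Real.exp (l * Y v)
      ≤ (E1 * (μ v * (b - Y v)) + E2 * (μ v * (Y v - a))) * (1 / (b - a)) := by
    intro v
    refine (mul_le_mul_of_nonneg_left (key v) (hμ.1 v)).trans (le_of_eq ?_)
    field_simp
    try ring
  have hsum1 : Summable (fun v => μ v * (b - Y v)) :=
    summable_mu_mul hμ (h := fun v => b - Y v) (C := |b| + (|a| + |b|))
      (fun v => (abs_sub (b) (Y v)).trans (by have := hYb v; have := le_abs_self b; linarith [abs_abs b]))
  have hsum2 : Summable (fun v => μ v * (Y v - a)) :=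
    summable_mu_mul hμ (h := fun v => Y v - a) (C := (|a| + |b|) + |a|)
      (fun v => (abs_sub (Y v) a).trans (by have := hYb v; linarith))
  have hsumexp : Summable (fun v => μ v * Real.exp (l * Y v)) := by
    apply summable_mu_mul hμ (C := Real.exp (|l| * (|a| + |b|)))
    intro v
    rw [abs_of_nonneg (Real.exp_pos _).le, Real.exp_le_exp]
    calc l * Y v ≤ |l * Y v| := le_abs_self _
      _ = |l| * |Y v| := abs_mul _ _
      _ ≤ |l| * (|a| + |b|) := mul_le_mul_of_nonneg_left (hYb v) (abs_nonneg l)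
  have hmain : ∑' v, μ v * Real.exp (l * Y v)
      ≤ (E1 * b + E2 * (-a)) * (1 / (b - a)) := by
    have hs : Summable (fun v => (E1 * (μ v * (b - Y v)) + E2 * (μ v * (Y v - a))) * (1 / (b - a))) :=
      (((hsum1.mul_left E1).add (hsum2.mul_left E2)).mul_right _)
    refine (Summable.tsum_le_tsum hpt hsumexp hs).trans (le_of_eq ?_)
    rw [tsum_mul_right, Summable.tsum_add (hsum1.mul_left E1) (hsum2.mul_left E2),
      Summable.tsum_mul_left E1 hsum1, Summable.tsum_mul_left E2 hsum2, hS1, hS2]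
  refine hmain.trans ?_
  set p := -a / (b - a) with hp
  set s := l * (b - a) with hs
  have hp0 : 0 ≤ p := div_nonneg (by linarith) (by linarith)
  have hp1 : p ≤ 1 := by
    rw [hp, div_le_one (by linarith)]; linarith
  have hE2eq : E2 = E1 * Real.exp s := by
    rw [hE1, hE2, ← Real.exp_add]
    congr 1; rw [hs]; ring
  have heq1 : (E1 * b + E2 * (-a)) * (1 / (b - a)) = E1 * (1 - p + p * Real.exp s) := by
    rw [hE2eq, hp]
    field_simp
    try ring
  have heq2 : E1 * Real.exp (p * s + s ^ 2 / 8) = Real.exp (l ^ 2 * (b - a) ^ 2 / 8) := by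
    rw [hE1, ← Real.exp_add]
    congr 1
    rw [hp, hs]
    field_simp
    try ring
  rw [heq1, ← heq2]
  exact mul_le_mul_of_nonneg_left (hoeff_core hp0 hp1 s) (Real.exp_pos _).le

end WH
/-! ### Part 3: McDiarmid -/

section McD
variable {μ : ℕ → ℝ}

/-- Bounded differences. -/
def BDiff {m : ℕ} (f : (Fin m → ℕ) → ℝ) (c : ℝ) : Prop :=
  ∀ (x x' : Fin m → ℕ) (t : Fin m), (∀ s, s ≠ t → x s = x' s) → f x - f x' ≤ c

lemma expect_zero (f : (Fin 0 → ℕ) → ℝ) : expect μ 0 f = f default := by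
  rw [expect_eq, tsum_eq_single (default : Fin 0 → ℕ)
    (fun b hb => absurd (Subsingleton.elim b default) hb)]
  simp [Wt]

lemma expect_mul_const (hμ : IsProb μ) {m : ℕ} {h : (Fin m → ℕ) → ℝ} {C : ℝ}
    (hh : Bdd h C) (k : ℝ) :
    expect μ m (fun x => h x * k) = expect μ m h * k := by
  rw [expect_eq, expect_eq, ← tsum_mul_right]
  apply tsum_congr; intro x; ring

lemma expect_succ_inner (hμ : IsProb μ) {m : ℕ} {f : (Fin (m+1) → ℕ) → ℝ} {C : ℝ}
    (hf : Bdd f C) :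
    expect μ (m+1) f = expect μ m (fun x => ∑' v, μ v * f (Fin.cons v x)) := by
  have hC : 0 ≤ C := (abs_nonneg _).trans (hf default)
  have hT1 : ∀ v : ℕ, Summable (fun x : Fin m → ℕ => μ v * (Wt μ m x * f (Fin.cons v x))) :=
    fun v => (summable_wt_mul hμ (fun x => hf _)).mul_left (μ v)
  have hT2 : ∀ x : Fin m → ℕ, Summable (fun v : ℕ => μ v * (Wt μ m x * f (Fin.cons v x))) :=
    fun x => summable_mu_mul hμ (h := fun v => Wt μ m x * f (Fin.cons v x))
      (C := Wt μ m x * C) (fun v => by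
        rw [abs_mul, abs_of_nonneg (Wt_nonneg hμ m x)]
        exact mul_le_mul_of_nonneg_left (hf _) (Wt_nonneg hμ m x))
  have hTu : Summable (Function.uncurry
      (fun (v : ℕ) (x : Fin m → ℕ) => μ v * (Wt μ m x * f (Fin.cons v x)))) := by
    apply Summable.of_abs
    apply Summable.of_nonneg_of_le (fun p => abs_nonneg _) (fun p => ?_)
      ((Summable.mul_of_nonneg hμ.summable (summable_Wt hμ m) hμ.1
        (fun x => Wt_nonneg hμ m x)).mul_right C)
    simp only [Function.uncurry]
    rw [abs_mul, abs_mul, abs_of_nonneg (hμ.1 _), abs_of_nonneg (Wt_nonneg hμ m _), mul_assoc]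
    exact mul_le_mul_of_nonneg_left
      (mul_le_mul_of_nonneg_left (hf _) (Wt_nonneg hμ m _)) (hμ.1 _)
  have hsummu : ∀ x : Fin m → ℕ, Summable (fun v => μ v * f (Fin.cons v x)) :=
    fun x => summable_mu_mul hμ (fun v => hf _)
  have h1 : expect μ m (fun x => ∑' v, μ v * f (Fin.cons v x))
      = ∑' (x : Fin m → ℕ) (v : ℕ), μ v * (Wt μ m x * f (Fin.cons v x)) := by
    rw [expect_eq]
    apply tsum_congr; intro x
    rw [← Summable.tsum_mul_left (Wt μ m x) (hsummu x)]
    apply tsum_congr; intro v; ring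
  rw [h1, Summable.tsum_comm' hTu hT1 hT2, expect_succ hμ hf]
  apply tsum_congr; intro v
  rw [expect_eq, ← Summable.tsum_mul_left (μ v) (summable_wt_mul hμ (fun x => hf _))]

lemma bdd_g (hμ : IsProb μ) {m : ℕ} {f : (Fin (m+1) → ℕ) → ℝ} {C : ℝ} (hf : Bdd f C) :
    Bdd (fun x : Fin m → ℕ => ∑' v, μ v * f (Fin.cons v x)) C := by
  intro x
  refine (abs_tsum_le (summable_mu_mul hμ (fun v => hf _))).trans ?_
  have : ∑' v, |μ v * f (Fin.cons v x)| ≤ ∑' v, μ v * C := by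
    apply Summable.tsum_le_tsum _ (summable_mu_mul hμ (fun v => hf _)).abs (hμ.summable.mul_right C)
    intro v
    rw [abs_mul, abs_of_nonneg (hμ.1 v)]
    exact mul_le_mul_of_nonneg_left (hf _) (hμ.1 v)
  refine this.trans ?_
  rw [tsum_mul_right, hμ.2, one_mul]

lemma mcdiarmid_mgf (hμ : IsProb μ) {c : ℝ} (l : ℝ) :
    ∀ (m : ℕ) (f : (Fin m → ℕ) → ℝ) (C : ℝ), Bdd f C → BDiff f c →
    expect μ m (fun x => Real.exp (l * (f x - expect μ m f)))
      ≤ Real.exp (m * (l ^ 2 * c ^ 2 / 8)) := by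
  intro m
  induction m with
  | zero =>
    intro f C hfB hfD
    rw [expect_zero (fun x => Real.exp (l * (f x - expect μ 0 f))), expect_zero f]
    simp
  | succ m ih =>
    intro f C hfB hfD
    set E := expect μ (m+1) f with hE
    have hEabs : |E| ≤ C := expect_abs_le hμ hfB
    have hC : 0 ≤ C := (abs_nonneg _).trans (hfB default)
    set g : (Fin m → ℕ) → ℝ := fun x => ∑' v, μ v * f (Fin.cons v x) with hg
    have hgB : Bdd g C := bdd_g hμ hfB
    have hgD : BDiff g c := by
      intro x x' t ht
      have hsub : ∀ v : ℕ, f (Fin.cons v x) - f (Fin.cons v x') ≤ c := by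
        intro v
        apply hfD (Fin.cons v x) (Fin.cons v x') t.succ
        intro s hs
        rcases Fin.eq_zero_or_eq_succ s with rfl | ⟨j, rfl⟩
        · simp
        · simp only [Fin.cons_succ]
          exact ht j (fun hj => hs (by rw [hj]))
      have h1 : g x - g x' = ∑' v, μ v * (f (Fin.cons v x) - f (Fin.cons v x')) := by
        rw [hg]
        simp only
        rw [← Summable.tsum_sub (summable_mu_mul hμ (fun v => hfB _)) (summable_mu_mul hμ (fun v => hfB _))]
        apply tsum_congr; intro v; ring
      rw [h1]
      have h2 : ∑' v, μ v * (f (Fin.cons v x) - f (Fin.cons v x')) ≤ ∑' v, μ v * c := by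
        apply Summable.tsum_le_tsum _ _ (hμ.summable.mul_right c)
        · exact fun v => mul_le_mul_of_nonneg_left (hsub v) (hμ.1 v)
        · exact summable_mu_mul hμ (h := fun v => f (Fin.cons v x) - f (Fin.cons v x'))
            (C := C + C) (fun v => (abs_sub _ _).trans (add_le_add (hfB _) (hfB _)))
      refine h2.trans ?_
      rw [tsum_mul_right, hμ.2, one_mul]
    have hEg : expect μ m g = E := (expect_succ_inner hμ hfB).symm
    set CF : ℝ := Real.exp (|l| * (C + C)) with hCF
    have hFB : Bdd (fun x : Fin (m+1) → ℕ => Real.exp (l * (f x - E))) CF := by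
      intro x
      rw [abs_of_nonneg (Real.exp_pos _).le, hCF, Real.exp_le_exp]
      calc l * (f x - E) ≤ |l * (f x - E)| := le_abs_self _
        _ = |l| * |f x - E| := abs_mul _ _
        _ ≤ |l| * (C + C) := mul_le_mul_of_nonneg_left
            ((abs_sub _ _).trans (add_le_add (hfB x) hEabs)) (abs_nonneg l)
    have step1 : expect μ (m+1) (fun x => Real.exp (l * (f x - E)))
        = expect μ m (fun x => ∑' v, μ v * Real.exp (l * (f (Fin.cons v x) - E))) :=
      expect_succ_inner hμ hFB
    have hpt : ∀ x : Fin m → ℕ, ∑' v, μ v * Real.exp (l * (f (Fin.cons v x) - E))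
        ≤ Real.exp (l * (g x - E)) * Real.exp (l ^ 2 * c ^ 2 / 8) := by
      intro x
      set Y : ℕ → ℝ := fun v => f (Fin.cons v x) - g x with hY
      have hYbdd : ∀ v, |Y v| ≤ C + C := fun v =>
        (abs_sub _ _).trans (add_le_add (hfB _) (hgB x))
      have hbdda : BddAbove (Set.range Y) := by
        refine ⟨C + C, ?_⟩
        rintro y ⟨v, rfl⟩
        exact (le_abs_self _).trans (hYbdd v)
      set b := ⨆ v, Y v with hb
      have hY2 : ∀ v, Y v ≤ b := fun v => le_ciSup hbdda v
      have hY1 : ∀ v, b - c ≤ Y v := by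
        intro v
        have : b ≤ Y v + c := by
          apply ciSup_le
          intro v'
          have := hfD (Fin.cons v' x) (Fin.cons v x) 0 (by
            intro s hs
            rcases Fin.eq_zero_or_eq_succ s with rfl | ⟨j, rfl⟩
            · exact absurd rfl hs
            · simp)
          simp only [hY]
          linarith
        linarith
      have hmeanY : ∑' v, μ v * Y v = 0 := by
        simp only [hY, mul_sub]
        rw [Summable.tsum_sub (summable_mu_mul hμ (fun v => hfB _)) (hμ.summable.mul_right (g x)),
          tsum_mul_right, hμ.2, one_mul]
        simp [hg]
      have hhoeff := hoeff_weighted hμ l hY1 hY2 hmeanY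
      have hba : (b - (b - c)) = c := by ring
      rw [hba] at hhoeff
      have hsplit : ∀ v, μ v * Real.exp (l * (f (Fin.cons v x) - E))
          = Real.exp (l * (g x - E)) * (μ v * Real.exp (l * Y v)) := by
        intro v
        have h : Real.exp (l * (g x - E)) * Real.exp (l * Y v)
            = Real.exp (l * (f (Fin.cons v x) - E)) := by
          rw [← Real.exp_add]
          congr 1
          simp only [hY]
          ring
        rw [← h]; ring
      calc ∑' v, μ v * Real.exp (l * (f (Fin.cons v x) - E))
          = Real.exp (l * (g x - E)) * ∑' v, μ v * Real.exp (l * Y v) := by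
            rw [← Summable.tsum_mul_left _ (summable_mu_mul hμ (h := fun v => Real.exp (l * Y v))
              (C := Real.exp (|l| * (C + C))) (fun v => by
                rw [abs_of_nonneg (Real.exp_pos _).le, Real.exp_le_exp]
                calc l * Y v ≤ |l * Y v| := le_abs_self _
                  _ = |l| * |Y v| := abs_mul _ _
                  _ ≤ |l| * (C + C) := mul_le_mul_of_nonneg_left (hYbdd v) (abs_nonneg l)))]
            exact tsum_congr hsplit
        _ ≤ Real.exp (l * (g x - E)) * Real.exp (l ^ 2 * c ^ 2 / 8) :=
            mul_le_mul_of_nonneg_left hhoeff (Real.exp_pos _).le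
    have hinner_bdd : Bdd (fun x : Fin m → ℕ =>
        ∑' v, μ v * Real.exp (l * (f (Fin.cons v x) - E))) CF :=
      bdd_g hμ (f := fun y => Real.exp (l * (f y - E))) hFB
    have hgE : Bdd (fun x : Fin m → ℕ => Real.exp (l * (g x - E))) CF := by
      intro x
      rw [abs_of_nonneg (Real.exp_pos _).le, hCF, Real.exp_le_exp]
      calc l * (g x - E) ≤ |l * (g x - E)| := le_abs_self _
        _ = |l| * |g x - E| := abs_mul _ _
        _ ≤ |l| * (C + C) := mul_le_mul_of_nonneg_left
            ((abs_sub _ _).trans (add_le_add (hgB x) hEabs)) (abs_nonneg l)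
    have step2 : expect μ m (fun x => ∑' v, μ v * Real.exp (l * (f (Fin.cons v x) - E)))
        ≤ expect μ m (fun x => Real.exp (l * (g x - E)) * Real.exp (l ^ 2 * c ^ 2 / 8)) :=
      expect_mono hμ hinner_bdd (fun x => by
        rw [abs_mul, abs_of_nonneg (Real.exp_pos (l ^ 2 * c ^ 2 / 8)).le]
        exact mul_le_mul_of_nonneg_right (hgE x) (Real.exp_pos _).le) hpt
    have step3 : expect μ m (fun x => Real.exp (l * (g x - E)) * Real.exp (l ^ 2 * c ^ 2 / 8))
        = expect μ m (fun x => Real.exp (l * (g x - E))) * Real.exp (l ^ 2 * c ^ 2 / 8) :=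
      expect_mul_const hμ hgE _
    have step4 : expect μ m (fun x => Real.exp (l * (g x - E)))
        ≤ Real.exp (m * (l ^ 2 * c ^ 2 / 8)) := by
      have := ih g C hgB hgD
      rwa [hEg] at this
    calc expect μ (m+1) (fun x => Real.exp (l * (f x - E)))
        ≤ expect μ m (fun x => Real.exp (l * (g x - E))) * Real.exp (l ^ 2 * c ^ 2 / 8) := by
          rw [step1]; rw [step3] at step2; exact step2
      _ ≤ Real.exp (m * (l ^ 2 * c ^ 2 / 8)) * Real.exp (l ^ 2 * c ^ 2 / 8) :=
          mul_le_mul_of_nonneg_right step4 (Real.exp_pos _).le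
      _ = Real.exp ((m + 1 : ℕ) * (l ^ 2 * c ^ 2 / 8)) := by
          rw [← Real.exp_add]
          congr 1
          push_cast
          ring

lemma probOf_eq (μ : ℕ → ℝ) (m : ℕ) (A : Set (Fin m → ℕ)) :
    probOf μ m A = ∑' x, Set.indicator A (Wt μ m) x := rfl

lemma summable_indicator (hμ : IsProb μ) {m : ℕ} (A : Set (Fin m → ℕ)) :
    Summable (Set.indicator A (Wt μ m)) := by
  apply Summable.of_nonneg_of_le (fun x => Set.indicator_nonneg (fun y _ => Wt_nonneg hμ m y) x)
    (fun x => ?_) (summable_Wt hμ m)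
  by_cases hx : x ∈ A
  · rw [Set.indicator_of_mem hx]
  · rw [Set.indicator_of_notMem hx]; exact Wt_nonneg hμ m x

lemma probOf_compl (hμ : IsProb μ) {m : ℕ} (A : Set (Fin m → ℕ)) :
    probOf μ m A = 1 - probOf μ m Aᶜ := by
  have h : ∀ x, Set.indicator A (Wt μ m) x = Wt μ m x - Set.indicator Aᶜ (Wt μ m) x := by
    intro x
    by_cases hx : x ∈ A
    · rw [Set.indicator_of_mem hx, Set.indicator_of_notMem (by simpa using hx), sub_zero]
    · rw [Set.indicator_of_notMem hx, Set.indicator_of_mem (by simpa using hx), sub_self]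
  rw [probOf_eq]
  calc ∑' x, Set.indicator A (Wt μ m) x
      = ∑' x, (Wt μ m x - Set.indicator Aᶜ (Wt μ m) x) := tsum_congr h
    _ = ∑' x, Wt μ m x - ∑' x, Set.indicator Aᶜ (Wt μ m) x :=
        Summable.tsum_sub (summable_Wt hμ m) (summable_indicator hμ Aᶜ)
    _ = 1 - probOf μ m Aᶜ := by rw [tsum_Wt hμ m, probOf_eq]

lemma mcdiarmid_tail (hμ : IsProb μ) {m : ℕ} (hm : 0 < m) {f : (Fin m → ℕ) → ℝ} {c C : ℝ}
    (hc : 0 < c) (hfB : Bdd f C) (hfD : BDiff f c) (hEf : expect μ m f ≤ 0)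
    {ε : ℝ} (hε : 0 < ε) :
    probOf μ m {x | ε < f x} ≤ Real.exp (-2 * ε ^ 2 / (m * c ^ 2)) := by
  set l : ℝ := 4 * ε / (m * c ^ 2) with hl
  have hm' : (0:ℝ) < m := by exact_mod_cast hm
  have hlpos : 0 < l := by positivity
  set E := expect μ m f with hE
  have hEabs : |E| ≤ C := expect_abs_le hμ hfB
  have hC : 0 ≤ C := (abs_nonneg _).trans (hfB (fun _ => 0))
  set K := Real.exp (-(l * ε)) with hK
  have hpt : ∀ x, Set.indicator {x | ε < f x} (Wt μ m) x
      ≤ Wt μ m x * (K * Real.exp (l * (f x - E))) := by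
    intro x
    by_cases hx : x ∈ {x | ε < f x}
    · rw [Set.indicator_of_mem hx]
      have h1 : (1:ℝ) ≤ K * Real.exp (l * (f x - E)) := by
        rw [hK, ← Real.exp_add]
        apply Real.one_le_exp
        have hfx : ε < f x := hx
        have : -(l * ε) + l * (f x - E) = l * ((f x - ε) + (-E)) := by ring
        rw [this]
        apply mul_nonneg hlpos.le
        have : 0 ≤ -E := by linarith
        linarith
      calc Wt μ m x = Wt μ m x * 1 := (mul_one _).symm
        _ ≤ Wt μ m x * (K * Real.exp (l * (f x - E))) :=
            mul_le_mul_of_nonneg_left h1 (Wt_nonneg hμ m x)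
    · rw [Set.indicator_of_notMem hx]
      exact mul_nonneg (Wt_nonneg hμ m x) (by positivity)
  set CF : ℝ := Real.exp (|l| * (C + C)) with hCF
  have hFB : Bdd (fun x => Real.exp (l * (f x - E))) CF := by
    intro x
    rw [abs_of_nonneg (Real.exp_pos _).le, hCF, Real.exp_le_exp]
    calc l * (f x - E) ≤ |l * (f x - E)| := le_abs_self _
      _ = |l| * |f x - E| := abs_mul _ _
      _ ≤ |l| * (C + C) := mul_le_mul_of_nonneg_left
          ((abs_sub _ _).trans (add_le_add (hfB x) hEabs)) (abs_nonneg l)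
  have hKFB : Bdd (fun x => K * Real.exp (l * (f x - E))) (K * CF) := by
    intro x
    rw [abs_mul, abs_of_nonneg (Real.exp_pos _).le, abs_of_nonneg (Real.exp_pos _).le]
    exact mul_le_mul_of_nonneg_left (by simpa [abs_of_nonneg (Real.exp_pos _).le] using hFB x)
      (Real.exp_pos _).le
  have h1 : probOf μ m {x | ε < f x} ≤ expect μ m (fun x => K * Real.exp (l * (f x - E))) := by
    rw [probOf_eq, expect_eq]
    exact Summable.tsum_le_tsum hpt (summable_indicator hμ _) (summable_wt_mul hμ hKFB)
  have h2 : expect μ m (fun x => K * Real.exp (l * (f x - E)))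
      = K * expect μ m (fun x => Real.exp (l * (f x - E))) := by
    rw [expect_eq, expect_eq, ← Summable.tsum_mul_left K (summable_wt_mul hμ hFB)]
    apply tsum_congr; intro x; ring
  have h3 : expect μ m (fun x => Real.exp (l * (f x - E)))
      ≤ Real.exp (m * (l ^ 2 * c ^ 2 / 8)) := mcdiarmid_mgf hμ l m f C hfB hfD
  have h4 : probOf μ m {x | ε < f x} ≤ K * Real.exp (m * (l ^ 2 * c ^ 2 / 8)) := by
    refine (h1.trans (le_of_eq h2)).trans ?_
    exact mul_le_mul_of_nonneg_left h3 (Real.exp_pos _).le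
  refine h4.trans (le_of_eq ?_)
  rw [hK, ← Real.exp_add]
  congr 1
  rw [hl]
  field_simp
  ring

end McD
/-! ### Part 4: empirical measure and bounded differences of Z -/

section Emp
variable {μ : ℕ → ℝ}

lemma sqrt_add_le (x y : ℝ) (hx : 0 ≤ x) (hy : 0 ≤ y) :
    Real.sqrt (x + y) ≤ Real.sqrt x + Real.sqrt y := by
  have h : x + y ≤ (Real.sqrt x + Real.sqrt y) ^ 2 := by
    nlinarith [Real.sq_sqrt hx, Real.sq_sqrt hy, Real.sqrt_nonneg x, Real.sqrt_nonneg y]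
  calc Real.sqrt (x + y) ≤ Real.sqrt ((Real.sqrt x + Real.sqrt y) ^ 2) := Real.sqrt_le_sqrt h
    _ = Real.sqrt x + Real.sqrt y := Real.sqrt_sq (by positivity)

/-- The fiber of `x` over `i`. -/
def fib {m : ℕ} (x : Fin m → ℕ) (i : ℕ) : Finset (Fin m) :=
  Finset.univ.filter (fun t => x t = i)

lemma empMeas_eq {m : ℕ} (x : Fin m → ℕ) (i : ℕ) :
    empMeas m x i = (fib x i).card / m := rfl

lemma empMeas_nonneg {m : ℕ} (x : Fin m → ℕ) (i : ℕ) : 0 ≤ empMeas m x i := by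
  rw [empMeas_eq]; positivity

lemma fib_zero_of_not_mem {m : ℕ} (x : Fin m → ℕ) {i : ℕ}
    (h : i ∉ Finset.univ.image x) : fib x i = ∅ := by
  rw [fib, Finset.filter_eq_empty_iff]
  intro t _
  intro ht
  exact h (Finset.mem_image.mpr ⟨t, Finset.mem_univ t, ht⟩)

lemma empMeas_zero_of_not_mem {m : ℕ} (x : Fin m → ℕ) {i : ℕ}
    (h : i ∉ Finset.univ.image x) : empMeas m x i = 0 := by
  rw [empMeas_eq, fib_zero_of_not_mem x h]; simp

lemma sum_fib {m : ℕ} (x : Fin m → ℕ) :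
    ∑ i ∈ Finset.univ.image x, (fib x i).card = m := by
  have := Finset.card_eq_sum_card_fiberwise
    (f := x) (s := Finset.univ) (t := Finset.univ.image x)
    (fun t _ => Finset.mem_image.mpr ⟨t, Finset.mem_univ t, rfl⟩)
  simpa [fib] using this.symm

lemma summable_empMeas {m : ℕ} (x : Fin m → ℕ) : Summable (empMeas m x) :=
  summable_of_ne_finset_zero (s := Finset.univ.image x)
    (fun i hi => empMeas_zero_of_not_mem x hi)

lemma tsum_empMeas {m : ℕ} (hm : 0 < m) (x : Fin m → ℕ) : ∑' i, empMeas m x i = 1 := by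
  rw [tsum_eq_sum (s := Finset.univ.image x) (fun i hi => empMeas_zero_of_not_mem x hi)]
  have : ∑ i ∈ Finset.univ.image x, empMeas m x i
      = (∑ i ∈ Finset.univ.image x, ((fib x i).card : ℝ)) / m := by
    rw [Finset.sum_div]
    rfl
  rw [this]
  rw [← Nat.cast_sum, sum_fib x]
  field_simp

lemma summable_abs_sub (hμ : IsProb μ) {m : ℕ} (x : Fin m → ℕ) :
    Summable (fun i => |empMeas m x i - μ i|) := by
  apply Summable.of_nonneg_of_le (fun i => abs_nonneg _) (fun i => ?_)
    ((summable_empMeas x).add hμ.summable)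
  refine (abs_sub _ _).trans ?_
  rw [abs_of_nonneg (empMeas_nonneg x i), abs_of_nonneg (hμ.1 i)]

lemma summable_sqrt_empMeas {m : ℕ} (x : Fin m → ℕ) :
    Summable (fun i => Real.sqrt (empMeas m x i)) :=
  summable_of_ne_finset_zero (s := Finset.univ.image x)
    (fun i hi => by rw [empMeas_zero_of_not_mem x hi, Real.sqrt_zero])

lemma tv_nonneg {m : ℕ} (x : Fin m → ℕ) : 0 ≤ tvDist (empMeas m x) μ := by
  rw [tvDist]
  have : 0 ≤ ∑' i, |empMeas m x i - μ i| := tsum_nonneg (fun i => abs_nonneg _)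
  linarith

lemma tv_le_one (hμ : IsProb μ) {m : ℕ} (hm : 0 < m) (x : Fin m → ℕ) :
    tvDist (empMeas m x) μ ≤ 1 := by
  rw [tvDist]
  have h1 : ∑' i, |empMeas m x i - μ i| ≤ ∑' i, (empMeas m x i + μ i) := by
    apply Summable.tsum_le_tsum (fun i => ?_) (summable_abs_sub hμ x)
      ((summable_empMeas x).add hμ.summable)
    refine (abs_sub _ _).trans ?_
    rw [abs_of_nonneg (empMeas_nonneg x i), abs_of_nonneg (hμ.1 i)]
  have h2 : ∑' i, (empMeas m x i + μ i) = 2 := by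
    rw [Summable.tsum_add (summable_empMeas x) hμ.summable, tsum_empMeas hm x, hμ.2]
    norm_num
  rw [h2] at h1
  linarith

lemma sqrt_empMeas_le {m : ℕ} (x : Fin m → ℕ) (i : ℕ) :
    Real.sqrt (empMeas m x i) = Real.sqrt ((fib x i).card) / Real.sqrt m := by
  rw [empMeas_eq, Real.sqrt_div (by positivity)]

lemma phi_nonneg {m : ℕ} (x : Fin m → ℕ) : 0 ≤ Phi m (empMeas m x) := by
  rw [Phi]
  have h1 : 0 ≤ ∑' j, Real.sqrt (empMeas m x j) := tsum_nonneg (fun i => Real.sqrt_nonneg _)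
  have h2 : 0 ≤ 1 / Real.sqrt m := by positivity
  exact mul_nonneg h2 h1

lemma phi_le_one {m : ℕ} (hm : 0 < m) (x : Fin m → ℕ) : Phi m (empMeas m x) ≤ 1 := by
  have hm' : (0:ℝ) < m := by exact_mod_cast hm
  have hsm : (0:ℝ) < Real.sqrt m := Real.sqrt_pos.mpr hm'
  rw [Phi]
  have h1 : ∑' j, Real.sqrt (empMeas m x j)
      = ∑ j ∈ Finset.univ.image x, Real.sqrt (empMeas m x j) :=
    tsum_eq_sum (fun i hi => by rw [empMeas_zero_of_not_mem x hi, Real.sqrt_zero])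
  have h2 : ∑ j ∈ Finset.univ.image x, Real.sqrt (empMeas m x j)
      ≤ ∑ j ∈ Finset.univ.image x, ((fib x j).card : ℝ) / Real.sqrt m := by
    apply Finset.sum_le_sum
    intro j _
    rw [sqrt_empMeas_le]
    gcongr
    exact Real.sqrt_le_iff.mpr ⟨by positivity, by
        have : (1:ℝ) ≤ ((fib x j).card : ℝ) ∨ ((fib x j).card : ℝ) = 0 := by
          rcases Nat.eq_zero_or_pos (fib x j).card with h | h
          · right; exact_mod_cast h
          · left; exact_mod_cast h
        rcases this with h | h
        · nlinarith
        · rw [h]; norm_num⟩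
  have h3 : ∑ j ∈ Finset.univ.image x, ((fib x j).card : ℝ) = m := by
    rw [← Nat.cast_sum, sum_fib x]
  rw [h1]
  calc (1 / Real.sqrt m) * ∑ j ∈ Finset.univ.image x, Real.sqrt (empMeas m x j)
      ≤ (1 / Real.sqrt m) * ∑ j ∈ Finset.univ.image x, ((fib x j).card : ℝ) / Real.sqrt m := by
        apply mul_le_mul_of_nonneg_left h2 (by positivity)
    _ = (∑ j ∈ Finset.univ.image x, ((fib x j).card : ℝ)) / (Real.sqrt m * Real.sqrt m) := by
        rw [← Finset.sum_div]
        field_simp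
    _ = 1 := by
        rw [h3, Real.mul_self_sqrt hm'.le]
        field_simp

end Emp
section ZF
variable {μ : ℕ → ℝ}

noncomputable def Zfun (μ : ℕ → ℝ) (m : ℕ) (x : Fin m → ℕ) : ℝ :=
  tvDist (empMeas m x) μ - Phi m (empMeas m x)

lemma Zfun_bdd (hμ : IsProb μ) {m : ℕ} (hm : 0 < m) : Bdd (Zfun μ m) 1 := by
  intro x
  rw [Zfun, abs_le]
  constructor
  · have := tv_nonneg (μ := μ) x
    have := phi_le_one hm x
    linarith
  · have := tv_le_one hμ hm x
    have := phi_nonneg x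
    linarith

lemma Zfun_bdiff (hμ : IsProb μ) {m : ℕ} (hm : 0 < m) : BDiff (Zfun μ m) (2 / m) := by
  have hm' : (0:ℝ) < m := by exact_mod_cast hm
  intro x x' t ht
  by_cases hab : x t = x' t
  · have : x = x' := by
      funext s
      by_cases hs : s = t
      · rw [hs]; exact hab
      · exact ht s hs
    rw [this, sub_self]
    positivity
  set a := x t with ha
  set b := x' t with hb
  -- fiber relations
  have hfib_other : ∀ i, i ≠ a → i ≠ b → fib x' i = fib x i := by
    intro i hia hib
    apply Finset.ext
    intro s
    simp only [fib, Finset.mem_filter, Finset.mem_univ, true_and]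
    by_cases hs : s = t
    · subst hs
      exact iff_of_false (fun h => hib (hb.trans h).symm) (fun h => hia (ha.trans h).symm)
    · rw [ht s hs]
  have hta : t ∈ fib x a := by simp [fib, ha]
  have htb : t ∉ fib x b := by simp [fib, ← ha]; exact hab
  have hfib_a : fib x' a = (fib x a).erase t := by
    apply Finset.ext
    intro s
    simp only [fib, Finset.mem_filter, Finset.mem_univ, true_and, Finset.mem_erase]
    by_cases hs : s = t
    · subst hs
      exact iff_of_false (fun h => hab (hb.trans h).symm) (fun h => h.1 rfl)
    · rw [ht s hs]
      exact ⟨fun h => ⟨hs, h⟩, fun h => h.2⟩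
  have hfib_b : fib x' b = insert t (fib x b) := by
    apply Finset.ext
    intro s
    simp only [fib, Finset.mem_filter, Finset.mem_univ, true_and, Finset.mem_insert]
    by_cases hs : s = t
    · subst hs
      exact ⟨fun _ => Or.inl rfl, fun _ => hb.symm⟩
    · rw [ht s hs]
      exact ⟨fun h => Or.inr h, fun h => h.elim (fun h' => absurd h' hs) id⟩
  have hcard_a : ((fib x' a).card : ℝ) = ((fib x a).card : ℝ) - 1 := by
    have h := Finset.card_erase_add_one hta
    rw [hfib_a]
    have : (((fib x a).erase t).card : ℝ) + 1 = ((fib x a).card : ℝ) := by exact_mod_cast h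
    linarith
  have hcard_b : ((fib x' b).card : ℝ) = ((fib x b).card : ℝ) + 1 := by
    rw [hfib_b]
    rw [Finset.card_insert_of_notMem htb]
    push_cast
    ring
  have he_a : empMeas m x' a = empMeas m x a - 1 / m := by
    rw [empMeas_eq, empMeas_eq, hcard_a, sub_div]
  have he_b : empMeas m x' b = empMeas m x b + 1 / m := by
    rw [empMeas_eq, empMeas_eq, hcard_b, add_div]
  have he_other : ∀ i, i ≠ a → i ≠ b → empMeas m x' i = empMeas m x i := by
    intro i hia hib
    rw [empMeas_eq, empMeas_eq, hfib_other i hia hib]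
  -- TV part
  have hTV : tvDist (empMeas m x) μ - tvDist (empMeas m x') μ ≤ 1 / m := by
    rw [tvDist, tvDist, ← mul_sub,
      ← Summable.tsum_sub (summable_abs_sub hμ x) (summable_abs_sub hμ x')]
    have hsupp : ∀ i ∉ ({a, b} : Finset ℕ),
        |empMeas m x i - μ i| - |empMeas m x' i - μ i| = 0 := by
      intro i hi
      simp only [Finset.mem_insert, Finset.mem_singleton] at hi
      push_neg at hi
      rw [he_other i hi.1 hi.2, sub_self]
    rw [tsum_eq_sum hsupp, Finset.sum_pair hab]
    have hda : |empMeas m x a - μ a| - |empMeas m x' a - μ a| ≤ 1 / m := by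
      refine (abs_sub_abs_le_abs_sub _ _).trans ?_
      have : empMeas m x a - μ a - (empMeas m x' a - μ a) = 1 / m := by
        rw [he_a]; ring
      rw [this, abs_of_pos (by positivity)]
    have hdb : |empMeas m x b - μ b| - |empMeas m x' b - μ b| ≤ 1 / m := by
      refine (abs_sub_abs_le_abs_sub _ _).trans ?_
      have : empMeas m x b - μ b - (empMeas m x' b - μ b) = -(1 / m) := by
        rw [he_b]; ring
      rw [this, abs_neg, abs_of_pos (by positivity)]
    have h12 : (1:ℝ)/2 * ((|empMeas m x a - μ a| - |empMeas m x' a - μ a|)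
        + (|empMeas m x b - μ b| - |empMeas m x' b - μ b|)) ≤ 1/2 * (1/m + 1/m) := by
      apply mul_le_mul_of_nonneg_left (add_le_add hda hdb) (by norm_num)
    refine h12.trans (le_of_eq ?_)
    field_simp
    norm_num
  -- Phi part
  have hPhi : Phi m (empMeas m x') - Phi m (empMeas m x) ≤ 1 / m := by
    rw [Phi, Phi, ← mul_sub,
      ← Summable.tsum_sub (summable_sqrt_empMeas x') (summable_sqrt_empMeas x)]
    have hsupp : ∀ i ∉ ({a, b} : Finset ℕ),
        Real.sqrt (empMeas m x' i) - Real.sqrt (empMeas m x i) = 0 := by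
      intro i hi
      simp only [Finset.mem_insert, Finset.mem_singleton] at hi
      push_neg at hi
      rw [he_other i hi.1 hi.2, sub_self]
    rw [tsum_eq_sum hsupp, Finset.sum_pair hab]
    have hda : Real.sqrt (empMeas m x' a) - Real.sqrt (empMeas m x a) ≤ 0 := by
      have h0 : (0:ℝ) < 1/m := by positivity
      have : empMeas m x' a ≤ empMeas m x a := by
        rw [he_a]
        linarith
      have := Real.sqrt_le_sqrt this
      linarith
    have hdb : Real.sqrt (empMeas m x' b) - Real.sqrt (empMeas m x b)
        ≤ Real.sqrt (1 / m) := by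
      rw [he_b]
      have := sqrt_add_le (empMeas m x b) (1 / m) (empMeas_nonneg x b) (by positivity)
      linarith
    have hmul : 1 / Real.sqrt m * ((Real.sqrt (empMeas m x' a) - Real.sqrt (empMeas m x a))
        + (Real.sqrt (empMeas m x' b) - Real.sqrt (empMeas m x b)))
        ≤ 1 / Real.sqrt m * (0 + Real.sqrt (1 / m)) := by
      apply mul_le_mul_of_nonneg_left (add_le_add hda hdb) (by positivity)
    refine hmul.trans (le_of_eq ?_)
    have hsq : Real.sqrt (1/(m:ℝ)) = 1 / Real.sqrt m := by
      rw [one_div, one_div, Real.sqrt_inv]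
    rw [zero_add, hsq, div_mul_div_comm, one_mul, Real.mul_self_sqrt hm'.le]
  rw [Zfun, Zfun]
  have : tvDist (empMeas m x) μ - Phi m (empMeas m x)
      - (tvDist (empMeas m x') μ - Phi m (empMeas m x'))
      = (tvDist (empMeas m x) μ - tvDist (empMeas m x') μ)
        + (Phi m (empMeas m x') - Phi m (empMeas m x)) := by ring
  rw [this]
  have h2m : (2:ℝ) / m = 1/m + 1/m := by ring
  rw [h2m]
  exact add_le_add hTV hPhi

end ZF
/-! ### Part 5: binomial expectations -/

noncomputable def Eb (p : ℝ) : ℕ → (ℕ → ℝ) → ℝ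
  | 0, F => F 0
  | (m+1), F => p * Eb p m (fun k => F (k+1)) + (1 - p) * Eb p m F

section EbFacts
variable {p : ℝ}

lemma Eb_congr (m : ℕ) {F G : ℕ → ℝ} (h : ∀ k, F k = G k) : Eb p m F = Eb p m G := by
  induction m generalizing F G with
  | zero => exact h 0
  | succ n ih => simp only [Eb]; rw [ih (fun k => h (k+1)), ih h]

lemma Eb_const (m : ℕ) (c : ℝ) : Eb p m (fun _ => c) = c := by
  induction m with
  | zero => rfl
  | succ n ih => simp only [Eb, ih]; ring

lemma Eb_add (m : ℕ) (F G : ℕ → ℝ) :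
    Eb p m (fun k => F k + G k) = Eb p m F + Eb p m G := by
  induction m generalizing F G with
  | zero => rfl
  | succ n ih => simp only [Eb, ih]; ring

lemma Eb_smul (m : ℕ) (c : ℝ) (F : ℕ → ℝ) :
    Eb p m (fun k => c * F k) = c * Eb p m F := by
  induction m generalizing F with
  | zero => rfl
  | succ n ih => simp only [Eb, ih]; ring

lemma Eb_mono (hp0 : 0 ≤ p) (hp1 : p ≤ 1) (m : ℕ) {F G : ℕ → ℝ} (h : ∀ k, F k ≤ G k) :
    Eb p m F ≤ Eb p m G := by
  induction m generalizing F G with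
  | zero => exact h 0
  | succ n ih =>
    simp only [Eb]
    have h1 := ih (fun k => h (k+1))
    have h2 := ih h
    have hq : 0 ≤ 1 - p := by linarith
    have := mul_le_mul_of_nonneg_left h1 hp0
    have := mul_le_mul_of_nonneg_left h2 hq
    linarith

lemma Eb_nonneg (hp0 : 0 ≤ p) (hp1 : p ≤ 1) (m : ℕ) {F : ℕ → ℝ} (h : ∀ k, 0 ≤ F k) :
    0 ≤ Eb p m F := by
  have := Eb_mono hp0 hp1 m (F := fun _ => 0) (G := F) h
  rwa [Eb_const] at this

lemma Eb_id (m : ℕ) : Eb p m (fun k => (k:ℝ)) = m * p := by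
  induction m with
  | zero => simp [Eb]
  | succ n ih =>
    simp only [Eb]
    have h1 : Eb p n (fun k => ((k+1 : ℕ):ℝ)) = Eb p n (fun k => (k:ℝ)) + 1 := by
      rw [← Eb_const n 1, ← Eb_add]
      apply Eb_congr
      intro k
      push_cast
      ring
    rw [h1, ih]
    push_cast
    ring

lemma Eb_sq (m : ℕ) : Eb p m (fun k => (k:ℝ)^2) = m * p + m * (m-1) * p^2 := by
  induction m with
  | zero => simp [Eb]
  | succ n ih =>
    simp only [Eb]
    have h1 : Eb p n (fun k => ((k+1 : ℕ):ℝ)^2)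
        = Eb p n (fun k => (k:ℝ)^2) + (2 * Eb p n (fun k => (k:ℝ)) + 1) := by
      rw [← Eb_const n 1, ← Eb_smul n 2 (fun k => (k:ℝ)), ← Eb_add, ← Eb_add]
      apply Eb_congr
      intro k
      push_cast
      ring
    rw [h1, ih, Eb_id]
    push_cast
    ring

lemma Eb_ind0 (m : ℕ) : Eb p m (fun k => if k = 0 then (1:ℝ) else 0) = (1-p)^m := by
  induction m with
  | zero => simp [Eb]
  | succ n ih =>
    simp only [Eb]
    have h1 : Eb p n (fun k => if k + 1 = 0 then (1:ℝ) else 0) = 0 := by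
      have h2 := Eb_congr (p := p) n (F := fun k => if k + 1 = 0 then (1:ℝ) else 0)
        (G := fun _ => (0:ℝ)) (fun k => by simp)
      rw [h2, Eb_const]
    rw [h1, ih]
    ring

lemma two_point_CS {pp q A1 A2 B1 B2 C1 C2 : ℝ} (hp : 0 ≤ pp) (hq : 0 ≤ q)
    (hB1 : 0 ≤ B1) (hB2 : 0 ≤ B2) (hC1 : 0 ≤ C1) (hC2 : 0 ≤ C2)
    (h1 : A1^2 ≤ B1 * C1) (h2 : A2^2 ≤ B2 * C2) :
    (pp * A1 + q * A2)^2 ≤ (pp * B1 + q * B2) * (pp * C1 + q * C2) := by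
  have key : 2 * (A1 * A2) ≤ B1 * C2 + B2 * C1 := by
    have hprod : (A1 * A2)^2 ≤ (B1 * C2) * (B2 * C1) := by
      have := mul_le_mul h1 h2 (sq_nonneg A2) (mul_nonneg hB1 hC1)
      calc (A1 * A2)^2 = A1^2 * A2^2 := by ring
        _ ≤ B1 * C1 * (B2 * C2) := this
        _ = (B1 * C2) * (B2 * C1) := by ring
    rcases le_or_gt (A1 * A2) 0 with ha | ha
    · have h0 : 0 ≤ B1 * C2 + B2 * C1 := by positivity
      linarith
    · by_contra hcon
      push_neg at hcon
      have hXY : 0 ≤ B1 * C2 + B2 * C1 := by positivity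
      have h4 : (B1 * C2 + B2 * C1)^2 < (2 * (A1 * A2))^2 := by nlinarith
      nlinarith [sq_nonneg (B1 * C2 - B2 * C1)]
  nlinarith [mul_nonneg (mul_nonneg hp hp) (sub_nonneg.mpr h1),
    mul_nonneg (mul_nonneg hq hq) (sub_nonneg.mpr h2),
    mul_nonneg (mul_nonneg hp hq) (sub_nonneg.mpr key)]

lemma Eb_CS (hp0 : 0 ≤ p) (hp1 : p ≤ 1) (m : ℕ) (F G : ℕ → ℝ) :
    (Eb p m (fun k => F k * G k))^2
      ≤ Eb p m (fun k => (F k)^2) * Eb p m (fun k => (G k)^2) := by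
  induction m generalizing F G with
  | zero => simp [Eb]; nlinarith [sq_nonneg (F 0 * G 0)]
  | succ n ih =>
    simp only [Eb]
    have hq : 0 ≤ 1 - p := by linarith
    exact two_point_CS hp0 hq
      (Eb_nonneg hp0 hp1 n (fun k => sq_nonneg _))
      (Eb_nonneg hp0 hp1 n (fun k => sq_nonneg _))
      (Eb_nonneg hp0 hp1 n (fun k => sq_nonneg _))
      (Eb_nonneg hp0 hp1 n (fun k => sq_nonneg _))
      (ih _ _) (ih _ _)

end EbFacts
section EbCore
variable {p : ℝ}

lemma Eb_var (hp0 : 0 ≤ p) (hp1 : p ≤ 1) (m : ℕ) :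
    Eb p m (fun k => ((k:ℝ) - m * p)^2) = (m * p) * (1 - p) := by
  have h1 : ∀ k : ℕ, ((k:ℝ) - m * p)^2
      = (k:ℝ)^2 + ((-2 * (m * p)) * (k:ℝ) + (m * p)^2) := fun k => by ring
  rw [Eb_congr m h1, Eb_add, Eb_add, Eb_smul, Eb_const, Eb_id, Eb_sq]
  ring

lemma Eb_binom_core (hp0 : 0 ≤ p) (hp1 : p ≤ 1) (m : ℕ) :
    Eb p m (fun k => |(k:ℝ) - m * p|)
      ≤ 2 * Eb p m (fun k => Real.sqrt (k:ℝ)) := by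
  set s : ℝ := m * p with hs
  have hs0 : 0 ≤ s := by positivity
  have hES0 : 0 ≤ Eb p m (fun k => Real.sqrt (k:ℝ)) :=
    Eb_nonneg hp0 hp1 m (fun k => Real.sqrt_nonneg _)
  have hvar : Eb p m (fun k => ((k:ℝ) - s)^2) = s * (1 - p) := Eb_var hp0 hp1 m
  by_cases hcase : s ≤ 1
  · -- small-mean case
    have habs : ∀ k : ℕ, |(k:ℝ) - s| = ((k:ℝ) - s) + 2 * max (s - (k:ℝ)) 0 := by
      intro k
      rcases le_total s ((k:ℝ)) with h | h
      · rw [abs_of_nonneg (by linarith), max_eq_right (by linarith)]; ring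
      · rw [abs_of_nonpos (by linarith), max_eq_left (by linarith)]; ring
    have hsplit : Eb p m (fun k => |(k:ℝ) - s|)
        = Eb p m (fun k => (k:ℝ) - s) + 2 * Eb p m (fun k => max (s - (k:ℝ)) 0) := by
      rw [Eb_congr m habs, Eb_add, ← Eb_smul]
    have hEk_s : Eb p m (fun k => (k:ℝ) - s) = 0 := by
      have h1 : ∀ k : ℕ, (k:ℝ) - s = (k:ℝ) + (-s) := fun k => by ring
      rw [Eb_congr m h1, Eb_add, Eb_id, Eb_const]
      rw [hs]; ring
    have hmax_le : ∀ k : ℕ, max (s - (k:ℝ)) 0 ≤ s * (if k = 0 then 1 else 0) := by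
      intro k
      cases k with
      | zero => simp [max_eq_left hs0]
      | succ j =>
        have hk1 : (1:ℝ) ≤ ((j+1 : ℕ):ℝ) := by push_cast; linarith
        simp only [Nat.succ_ne_zero, if_false, mul_zero]
        apply max_le _ le_rfl
        push_cast
        push_cast at hk1
        linarith
    have hEmax : Eb p m (fun k => max (s - (k:ℝ)) 0) ≤ s * (1 - p)^m := by
      have := Eb_mono hp0 hp1 m hmax_le
      rwa [Eb_smul, Eb_ind0] at this
    have hind_sqrt : ∀ k : ℕ, 1 + (-1) * (if k = 0 then (1:ℝ) else 0) ≤ Real.sqrt (k:ℝ) := by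
      intro k
      cases k with
      | zero => simp
      | succ j =>
        simp only [Nat.succ_ne_zero, if_false, mul_zero, add_zero]
        rw [Real.one_le_sqrt]
        push_cast
        linarith
    have hEsqrt_ge : 1 - (1 - p)^m ≤ Eb p m (fun k => Real.sqrt (k:ℝ)) := by
      have h := Eb_mono hp0 hp1 m hind_sqrt
      rw [Eb_add, Eb_const, Eb_smul, Eb_ind0] at h
      linarith
    have hq_bound : (1 - p)^m * (1 + s) ≤ 1 := by
      have hq0 : (0:ℝ) ≤ 1 - p := by linarith
      have h1 : (1 - p) ≤ Real.exp (-p) := by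
        have := Real.add_one_le_exp (-p); linarith
      have h2 : (1 - p)^m ≤ Real.exp (-p) ^ m := pow_le_pow_left₀ hq0 h1 m
      have h3 : Real.exp (-p) ^ m = Real.exp (-s) := by
        rw [← Real.exp_nat_mul, hs]; congr 1; ring
      have h4 : 1 + s ≤ Real.exp s := by
        have := Real.add_one_le_exp s; linarith
      calc (1 - p)^m * (1 + s) ≤ Real.exp (-s) * Real.exp s := by
            apply mul_le_mul (h2.trans_eq h3) h4 (by linarith) (Real.exp_pos _).le
        _ = 1 := by rw [← Real.exp_add]; simp
    have hmid : s * (1 - p)^m ≤ 1 - (1 - p)^m := by nlinarith [pow_nonneg (show (0:ℝ) ≤ 1 - p by linarith) m]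
    calc Eb p m (fun k => |(k:ℝ) - s|)
        = 0 + 2 * Eb p m (fun k => max (s - (k:ℝ)) 0) := by rw [hsplit, hEk_s]
      _ ≤ 2 * (s * (1 - p)^m) := by linarith
      _ ≤ 2 * (1 - (1 - p)^m) := by linarith
      _ ≤ 2 * Eb p m (fun k => Real.sqrt (k:ℝ)) := by linarith
  · -- large-mean case
    push_neg at hcase
    set EA := Eb p m (fun k => |(k:ℝ) - s|) with hEA
    set ES := Eb p m (fun k => Real.sqrt (k:ℝ)) with hESd
    set EKS := Eb p m (fun k => (k:ℝ) * Real.sqrt (k:ℝ)) with hEKS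
    have hEA0 : 0 ≤ EA := Eb_nonneg hp0 hp1 m (fun k => abs_nonneg _)
    have hEKS0 : 0 ≤ EKS := Eb_nonneg hp0 hp1 m
      (fun k => mul_nonneg (Nat.cast_nonneg k) (Real.sqrt_nonneg _))
    -- EA ≤ sqrt s
    have h1 : EA^2 ≤ s := by
      have hcs := Eb_CS hp0 hp1 m (fun k => |(k:ℝ) - s|) (fun _ => 1)
      simp only [mul_one, one_pow] at hcs
      rw [Eb_const] at hcs
      have heq : Eb p m (fun k => |(k:ℝ) - s|^2) = s * (1 - p) := by
        rw [Eb_congr m (fun k => sq_abs ((k:ℝ) - s)), hvar]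
      rw [heq, mul_one] at hcs
      refine hcs.trans ?_
      nlinarith
    have hEAs : EA ≤ Real.sqrt s := (Real.le_sqrt hEA0 hs0).mpr h1
    -- s^2 ≤ ES * EKS
    have h2 : s^2 ≤ ES * EKS := by
      have hcs := Eb_CS hp0 hp1 m (fun k => Real.sqrt (Real.sqrt (k:ℝ)))
        (fun k => Real.sqrt ((k:ℝ) * Real.sqrt (k:ℝ)))
      have hFG : ∀ k : ℕ, Real.sqrt (Real.sqrt (k:ℝ)) * Real.sqrt ((k:ℝ) * Real.sqrt (k:ℝ))
          = (k:ℝ) := by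
        intro k
        rw [← Real.sqrt_mul (Real.sqrt_nonneg _)]
        have : Real.sqrt (k:ℝ) * ((k:ℝ) * Real.sqrt (k:ℝ)) = (k:ℝ) * (k:ℝ) := by
          rw [show Real.sqrt (k:ℝ) * ((k:ℝ) * Real.sqrt (k:ℝ))
            = (Real.sqrt (k:ℝ) * Real.sqrt (k:ℝ)) * (k:ℝ) by ring,
            Real.mul_self_sqrt (Nat.cast_nonneg k)]
        rw [this, Real.sqrt_mul_self (Nat.cast_nonneg k)]
      have hF2 : ∀ k : ℕ, (Real.sqrt (Real.sqrt (k:ℝ)))^2 = Real.sqrt (k:ℝ) :=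
        fun k => Real.sq_sqrt (Real.sqrt_nonneg _)
      have hG2 : ∀ k : ℕ, (Real.sqrt ((k:ℝ) * Real.sqrt (k:ℝ)))^2 = (k:ℝ) * Real.sqrt (k:ℝ) :=
        fun k => Real.sq_sqrt (mul_nonneg (Nat.cast_nonneg k) (Real.sqrt_nonneg _))
      rw [Eb_congr m hFG, Eb_congr m hF2, Eb_congr m hG2, Eb_id, ← hs] at hcs
      exact hcs
    -- EKS^2 ≤ s * (s + s^2)
    have h3 : EKS^2 ≤ s * (s + s^2) := by
      have hcs := Eb_CS hp0 hp1 m (fun k => Real.sqrt (k:ℝ)) (fun k => (k:ℝ))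
      have hFG : ∀ k : ℕ, Real.sqrt (k:ℝ) * (k:ℝ) = (k:ℝ) * Real.sqrt (k:ℝ) :=
        fun k => by ring
      have hF2 : ∀ k : ℕ, (Real.sqrt (k:ℝ))^2 = (k:ℝ) :=
        fun k => Real.sq_sqrt (Nat.cast_nonneg k)
      rw [Eb_congr m hFG, Eb_congr m hF2, Eb_id, Eb_sq, ← hs] at hcs
      refine hcs.trans ?_
      have hmm : (m:ℝ) * ((m:ℝ) - 1) * p^2 ≤ s^2 := by
        rw [hs]
        nlinarith [sq_nonneg p, (Nat.cast_nonneg m : (0:ℝ) ≤ (m:ℝ))]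
      nlinarith
    have hEKSpos : 0 < EKS := by
      rcases eq_or_lt_of_le hEKS0 with h | h
      · exfalso
        rw [← h, mul_zero] at h2
        nlinarith
      · exact h
    have hEKSle : EKS ≤ Real.sqrt (s * (s + s^2)) :=
      (Real.le_sqrt hEKS0 (by positivity)).mpr h3
    have key : Real.sqrt s * EKS ≤ 2 * s^2 := by
      have h5 : Real.sqrt s * EKS ≤ Real.sqrt s * Real.sqrt (s * (s + s^2)) :=
        mul_le_mul_of_nonneg_left hEKSle (Real.sqrt_nonneg _)
      have h6 : Real.sqrt s * Real.sqrt (s * (s + s^2))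
          = Real.sqrt (s * (s * (s + s^2))) := (Real.sqrt_mul hs0 _).symm
      have h7 : s * (s * (s + s^2)) ≤ (2 * s^2)^2 := by nlinarith
      have h8 : Real.sqrt (s * (s * (s + s^2))) ≤ 2 * s^2 := by
        refine (Real.sqrt_le_sqrt h7).trans (le_of_eq ?_)
        exact Real.sqrt_sq (by positivity)
      linarith
    have hfinal : EA * EKS ≤ (2 * ES) * EKS := by
      calc EA * EKS ≤ Real.sqrt s * EKS := mul_le_mul_of_nonneg_right hEAs hEKS0
        _ ≤ 2 * s^2 := key
        _ ≤ 2 * (ES * EKS) := by nlinarith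
        _ = (2 * ES) * EKS := by ring
    exact le_of_mul_le_mul_right hfinal hEKSpos

end EbCore
section Link
variable {μ : ℕ → ℝ}

lemma fib_cons {m : ℕ} (v : ℕ) (x : Fin m → ℕ) (j : ℕ) :
    ((fib (Fin.cons v x) j).card) = (if v = j then 1 else 0) + (fib x j).card := by
  rw [fib, fib, Finset.card_filter, Finset.card_filter, Fin.sum_univ_succ]
  simp

lemma bdd_cntF {m : ℕ} (j : ℕ) (F : ℕ → ℝ) :
    Bdd (fun x : Fin m → ℕ => F ((fib x j).card)) (∑ k ∈ Finset.range (m+1), |F k|) := by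
  intro x
  have hcnt : (fib x j).card ≤ m := by
    refine le_trans (Finset.card_filter_le _ _) ?_
    simp
  exact Finset.single_le_sum (f := fun k => |F k|) (fun k _ => abs_nonneg _)
    (Finset.mem_range.mpr (Nat.lt_succ_of_le hcnt))

lemma expect_cnt (hμ : IsProb μ) (j : ℕ) : ∀ (m : ℕ) (F : ℕ → ℝ),
    expect μ m (fun x => F ((fib x j).card)) = Eb (μ j) m F := by
  intro m
  induction m with
  | zero =>
    intro F
    rw [expect_zero]
    have h : (fib (default : Fin 0 → ℕ) j).card = 0 := by simp [fib]
    rw [h]; rfl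
  | succ n ih =>
    intro F
    rw [expect_succ hμ (bdd_cntF j F)]
    set A := Eb (μ j) n (fun k => F (k+1)) with hA
    set B := Eb (μ j) n F with hB
    have hinner : ∀ v, expect μ n (fun x => F ((fib (Fin.cons v x) j).card))
        = if v = j then A else B := by
      intro v
      by_cases hv : v = j
      · rw [if_pos hv, hA, ← ih (fun k => F (k+1))]
        have heq : (fun x : Fin n → ℕ => F ((fib (Fin.cons v x) j).card))
            = fun x => F ((fib x j).card + 1) := by
          funext x
          rw [fib_cons, if_pos hv, Nat.add_comm]
        rw [heq]
      · rw [if_neg hv, hB, ← ih F]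
        have heq : (fun x : Fin n → ℕ => F ((fib (Fin.cons v x) j).card))
            = fun x => F ((fib x j).card) := by
          funext x
          rw [fib_cons, if_neg hv, Nat.zero_add]
        rw [heq]
    have hsum : Summable (fun v => μ v * (if v = j then A else B)) :=
      summable_mu_mul hμ (C := max |A| |B|) (fun v => by
        by_cases hv : v = j <;> simp [hv, le_max_left, le_max_right])
    calc ∑' v, μ v * expect μ n (fun x => F ((fib (Fin.cons v x) j).card))
        = ∑' v, μ v * (if v = j then A else B) := tsum_congr (fun v => by rw [hinner v])
      _ = μ j * A + (1 - μ j) * B := by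
          rw [Summable.tsum_eq_add_tsum_ite hsum j]
          simp only [if_pos rfl]
          congr 1
          have h1 : ∀ v, (if v = j then 0 else μ v * (if v = j then A else B))
              = (if v = j then 0 else μ v) * B := by
            intro v; by_cases hv : v = j <;> simp [hv]
          rw [tsum_congr h1, tsum_mul_right]
          have h2 : ∑' v, (if v = j then 0 else μ v) = 1 - μ j := by
            have h3 := Summable.tsum_eq_add_tsum_ite hμ.summable j
            rw [hμ.2] at h3
            linarith
          rw [h2]
      _ = Eb (μ j) (n+1) F := rfl

lemma expect_tsum_swap (hμ : IsProb μ) {m : ℕ} (g : (Fin m → ℕ) → ℕ → ℝ)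
    (hg0 : ∀ x j, 0 ≤ g x j) (hgs : ∀ x, Summable (g x)) {B : ℝ}
    (hgB : ∀ x, ∑' j, g x j ≤ B) :
    expect μ m (fun x => ∑' j, g x j) = ∑' j, expect μ m (fun x => g x j)
    ∧ Summable (fun j => expect μ m (fun x => g x j)) := by
  have hSx : ∀ x, 0 ≤ ∑' j, g x j := fun x => tsum_nonneg (hg0 x)
  have hgj_le : ∀ x j, g x j ≤ B := fun x j =>
    le_trans (Summable.le_tsum (hgs x) j (fun i _ => hg0 x i)) (hgB x)
  have hsum_col : ∀ j, Summable (fun x => Wt μ m x * g x j) := fun j =>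
    summable_wt_mul hμ (f := fun x => g x j) (C := B) (fun x => by
      rw [abs_of_nonneg (hg0 x j)]; exact hgj_le x j)
  have hsum_S : Summable (fun x => Wt μ m x * ∑' j, g x j) :=
    summable_wt_mul hμ (C := B) (fun x => by
      rw [abs_of_nonneg (hSx x)]; exact hgB x)
  have key : ENNReal.ofReal (expect μ m (fun x => ∑' j, g x j))
      = ∑' j, ENNReal.ofReal (expect μ m (fun x => g x j)) := by
    rw [expect_eq, ENNReal.ofReal_tsum_of_nonneg
      (fun x => mul_nonneg (Wt_nonneg hμ m x) (hSx x)) hsum_S]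
    have h1 : ∀ x, ENNReal.ofReal (Wt μ m x * ∑' j, g x j)
        = ∑' j, ENNReal.ofReal (Wt μ m x * g x j) := by
      intro x
      rw [← Summable.tsum_mul_left _ (hgs x)]
      exact ENNReal.ofReal_tsum_of_nonneg
        (fun j => mul_nonneg (Wt_nonneg hμ m x) (hg0 x j)) ((hgs x).mul_left _)
    rw [tsum_congr h1, ENNReal.tsum_comm]
    apply tsum_congr; intro j
    rw [expect_eq, ENNReal.ofReal_tsum_of_nonneg
      (fun x => mul_nonneg (Wt_nonneg hμ m x) (hg0 x j)) (hsum_col j)]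
  have hEj0 : ∀ j, 0 ≤ expect μ m (fun x => g x j) :=
    fun j => tsum_nonneg (fun x => mul_nonneg (Wt_nonneg hμ m x) (hg0 x j))
  have hfin : (∑' j, ENNReal.ofReal (expect μ m (fun x => g x j))) ≠ ⊤ := by
    rw [← key]; exact ENNReal.ofReal_ne_top
  have hsummable : Summable (fun j => expect μ m (fun x => g x j)) := by
    have h := ENNReal.summable_toReal hfin
    have heq : (fun j => (ENNReal.ofReal (expect μ m (fun x => g x j))).toReal)
        = fun j => expect μ m (fun x => g x j) := by
      funext j
      rw [ENNReal.toReal_ofReal (hEj0 j)]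
    rwa [heq] at h
  refine ⟨?_, hsummable⟩
  have hE0 : 0 ≤ expect μ m (fun x => ∑' j, g x j) :=
    tsum_nonneg (fun x => mul_nonneg (Wt_nonneg hμ m x) (hSx x))
  calc expect μ m (fun x => ∑' j, g x j)
      = (ENNReal.ofReal (expect μ m (fun x => ∑' j, g x j))).toReal :=
        (ENNReal.toReal_ofReal hE0).symm
    _ = (∑' j, ENNReal.ofReal (expect μ m (fun x => g x j))).toReal := by rw [key]
    _ = ∑' j, (ENNReal.ofReal (expect μ m (fun x => g x j))).toReal :=
        ENNReal.tsum_toReal_eq (fun j => ENNReal.ofReal_ne_top)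
    _ = ∑' j, expect μ m (fun x => g x j) :=
        tsum_congr (fun j => ENNReal.toReal_ofReal (hEj0 j))

lemma expect_smul (hμ : IsProb μ) {m : ℕ} {h : (Fin m → ℕ) → ℝ} {C : ℝ}
    (hh : Bdd h C) (k : ℝ) :
    expect μ m (fun x => k * h x) = k * expect μ m h := by
  rw [expect_eq, expect_eq, ← Summable.tsum_mul_left k (summable_wt_mul hμ hh)]
  apply tsum_congr; intro x; ring

lemma tsum_sqrt_emp_le {m : ℕ} (hm : 0 < m) (x : Fin m → ℕ) :
    ∑' j, Real.sqrt (empMeas m x j) ≤ Real.sqrt m := by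
  have hm' : (0:ℝ) < m := by exact_mod_cast hm
  have hsm : (0:ℝ) < Real.sqrt m := Real.sqrt_pos.mpr hm'
  have h := phi_le_one hm x
  rw [Phi] at h
  have h2 := mul_le_mul_of_nonneg_left h hsm.le
  rw [mul_one, ← mul_assoc] at h2
  rw [mul_one_div, div_self hsm.ne', one_mul] at h2
  exact h2

lemma tsum_abs_sub_le (hμ : IsProb μ) {m : ℕ} (hm : 0 < m) (x : Fin m → ℕ) :
    ∑' i, |empMeas m x i - μ i| ≤ 2 := by
  have h1 : ∑' i, |empMeas m x i - μ i| ≤ ∑' i, (empMeas m x i + μ i) := by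
    apply Summable.tsum_le_tsum (fun i => ?_) (summable_abs_sub hμ x)
      ((summable_empMeas x).add hμ.summable)
    refine (abs_sub _ _).trans ?_
    rw [abs_of_nonneg (empMeas_nonneg x i), abs_of_nonneg (hμ.1 i)]
  have h2 : ∑' i, (empMeas m x i + μ i) = 2 := by
    rw [Summable.tsum_add (summable_empMeas x) hμ.summable, tsum_empMeas hm x, hμ.2]
    norm_num
  linarith

lemma expect_tv_le_phi (hμ : IsProb μ) {m : ℕ} (hm : 0 < m) :
    expect μ m (fun x => tvDist (empMeas m x) μ)
      ≤ expect μ m (fun x => Phi m (empMeas m x)) := by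
  have hm' : (0:ℝ) < m := by exact_mod_cast hm
  have hsm : (0:ℝ) < Real.sqrt m := Real.sqrt_pos.mpr hm'
  have hTVswap := expect_tsum_swap hμ (fun x j => |empMeas m x j - μ j|)
    (fun x j => abs_nonneg _) (fun x => summable_abs_sub hμ x) (B := 2)
    (fun x => tsum_abs_sub_le hμ hm x)
  have hPhiswap := expect_tsum_swap hμ (fun x j => Real.sqrt (empMeas m x j))
    (fun x j => Real.sqrt_nonneg _) (fun x => summable_sqrt_empMeas x) (B := Real.sqrt m)
    (fun x => tsum_sqrt_emp_le hm x)
  -- per-coordinate inequality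
  have hperj : ∀ j, expect μ m (fun x => |empMeas m x j - μ j|)
      ≤ (2 / Real.sqrt m) * expect μ m (fun x => Real.sqrt (empMeas m x j)) := by
    intro j
    have hp0 := hμ.1 j
    have hp1 : μ j ≤ 1 := by
      have := Summable.le_tsum hμ.summable j (fun i _ => hμ.1 i)
      rwa [hμ.2] at this
    have h1 : expect μ m (fun x => |empMeas m x j - μ j|)
        = Eb (μ j) m (fun k => |(k:ℝ) - m * μ j| / m) := by
      rw [← expect_cnt hμ j m (fun k => |(k:ℝ) - m * μ j| / m)]
      congr 1
      funext x
      have he : empMeas m x j - μ j = (((fib x j).card : ℝ) - m * μ j) / m := by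
        rw [empMeas_eq]
        field_simp
      rw [he, abs_div, abs_of_pos hm']
    have h2 : expect μ m (fun x => Real.sqrt (empMeas m x j))
        = Eb (μ j) m (fun k => Real.sqrt (k:ℝ) / Real.sqrt m) := by
      rw [← expect_cnt hμ j m (fun k => Real.sqrt (k:ℝ) / Real.sqrt m)]
      congr 1
      funext x
      rw [sqrt_empMeas_le]
    rw [h1, h2]
    have hL : Eb (μ j) m (fun k => |(k:ℝ) - m * μ j| / m)
        = (1/(m:ℝ)) * Eb (μ j) m (fun k => |(k:ℝ) - m * μ j|) := by
      rw [← Eb_smul]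
      apply Eb_congr
      intro k
      ring
    have hR : Eb (μ j) m (fun k => Real.sqrt (k:ℝ) / Real.sqrt m)
        = (1/Real.sqrt m) * Eb (μ j) m (fun k => Real.sqrt (k:ℝ)) := by
      rw [← Eb_smul]
      apply Eb_congr
      intro k
      ring
    rw [hL, hR]
    have hcore := Eb_binom_core hp0 hp1 m
    have hES0 : 0 ≤ Eb (μ j) m (fun k => Real.sqrt (k:ℝ)) :=
      Eb_nonneg hp0 hp1 m (fun k => Real.sqrt_nonneg _)
    have heq : (2 / Real.sqrt m) * ((1/Real.sqrt m) * Eb (μ j) m (fun k => Real.sqrt (k:ℝ)))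
        = (1/(m:ℝ)) * (2 * Eb (μ j) m (fun k => Real.sqrt (k:ℝ))) := by
      rw [show ((m:ℝ)) = Real.sqrt m * Real.sqrt m from (Real.mul_self_sqrt hm'.le).symm]
      field_simp
      rw [Real.sqrt_sq hsm.le]
    rw [heq]
    exact mul_le_mul_of_nonneg_left hcore (by positivity)
  -- assemble
  have hTVbdd : ∀ x : Fin m → ℕ, abs (∑' i, |empMeas m x i - μ i|) ≤ 2 := by
    intro x
    rw [abs_of_nonneg (tsum_nonneg (fun i => abs_nonneg _))]
    exact tsum_abs_sub_le hμ hm x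
  have hPhibdd : ∀ x : Fin m → ℕ, |∑' j, Real.sqrt (empMeas m x j)| ≤ Real.sqrt m := by
    intro x
    rw [abs_of_nonneg (tsum_nonneg (fun i => Real.sqrt_nonneg _))]
    exact tsum_sqrt_emp_le hm x
  have hTVexp : expect μ m (fun x => tvDist (empMeas m x) μ)
      = (1/2) * ∑' j, expect μ m (fun x => |empMeas m x j - μ j|) := by
    rw [← hTVswap.1, ← expect_smul hμ (C := 2) hTVbdd (1/2)]
    rfl
  have hPhiexp : expect μ m (fun x => Phi m (empMeas m x))
      = (1/Real.sqrt m) * ∑' j, expect μ m (fun x => Real.sqrt (empMeas m x j)) := by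
    rw [← hPhiswap.1, ← expect_smul hμ (C := Real.sqrt m) hPhibdd (1/Real.sqrt m)]
    rfl
  rw [hTVexp, hPhiexp]
  have hsum_le : ∑' j, expect μ m (fun x => |empMeas m x j - μ j|)
      ≤ ∑' j, (2 / Real.sqrt m) * expect μ m (fun x => Real.sqrt (empMeas m x j)) :=
    Summable.tsum_le_tsum hperj hTVswap.2 (hPhiswap.2.mul_left _)
  have hpull : ∑' j, (2 / Real.sqrt m) * expect μ m (fun x => Real.sqrt (empMeas m x j))
      = (2 / Real.sqrt m) * ∑' j, expect μ m (fun x => Real.sqrt (empMeas m x j)) :=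
    Summable.tsum_mul_left _ hPhiswap.2
  rw [hpull] at hsum_le
  have hS0 : 0 ≤ ∑' j, expect μ m (fun x => Real.sqrt (empMeas m x j)) :=
    tsum_nonneg (fun j => tsum_nonneg (fun x =>
      mul_nonneg (Wt_nonneg hμ m x) (Real.sqrt_nonneg _)))
  calc (1/2) * ∑' j, expect μ m (fun x => |empMeas m x j - μ j|)
      ≤ (1/2) * ((2 / Real.sqrt m) * ∑' j, expect μ m (fun x => Real.sqrt (empMeas m x j))) :=
        mul_le_mul_of_nonneg_left hsum_le (by norm_num)
    _ = (1/Real.sqrt m) * ∑' j, expect μ m (fun x => Real.sqrt (empMeas m x j)) := by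
        ring

end Link

/-- For every `m ∈ ℕ`, `δ ∈ (0,1)` and probability distribution `μ` on ℕ,
with probability at least `1 - δ` over `X ~ μ^m`,
`‖μ̂_m - μ‖_TV ≤ Φ_m(μ̂_m) + 3 √(log(2/δ)/(2m))`. -/
theorem tv_le_Phi_high_prob (m : ℕ) (hm : 0 < m) (δ : ℝ) (hδ0 : 0 < δ) (hδ1 : δ < 1)
    (μ : ℕ → ℝ) (hμ : IsProb μ) :
    1 - δ ≤ probOf μ m {x | tvDist (empMeas m x) μ ≤
      Phi m (empMeas m x) + 3 * Real.sqrt (Real.log (2 / δ) / (2 * m))} := by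
  have hm' : (0:ℝ) < m := by exact_mod_cast hm
  set L := Real.log (2 / δ) with hL
  have hL0 : 0 < L := by
    rw [hL]
    apply Real.log_pos
    rw [lt_div_iff₀ hδ0]
    linarith
  set ε := 3 * Real.sqrt (L / (2 * m)) with hε
  have hε0 : 0 < ε := by
    rw [hε]
    have : 0 < L / (2 * (m:ℝ)) := by positivity
    have := Real.sqrt_pos.mpr this
    linarith
  -- expectation of Z is nonpositive
  have hTVbdd : Bdd (fun x : Fin m → ℕ => tvDist (empMeas m x) μ) 1 := by
    intro x
    rw [abs_le]
    exact ⟨by have := tv_nonneg (μ := μ) x; linarith, tv_le_one hμ hm x⟩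
  have hPhibdd : Bdd (fun x : Fin m → ℕ => Phi m (empMeas m x)) 1 := by
    intro x
    rw [abs_le]
    constructor
    · show -1 ≤ Phi m (empMeas m x)
      have := phi_nonneg (m := m) x
      linarith
    · exact phi_le_one hm x
  have hEZ : expect μ m (Zfun μ m) ≤ 0 := by
    have h1 : expect μ m (Zfun μ m)
        = expect μ m (fun x => tvDist (empMeas m x) μ)
          - expect μ m (fun x => Phi m (empMeas m x)) := by
      rw [← expect_sub hμ hTVbdd hPhibdd]
      rfl
    rw [h1]
    have := expect_tv_le_phi hμ hm
    linarith
  have htail := mcdiarmid_tail hμ hm (c := 2/(m:ℝ)) (C := 1) (by positivity)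
    (Zfun_bdd hμ hm) (Zfun_bdiff hμ hm) hEZ hε0
  have hexp : Real.exp (-2 * ε ^ 2 / (m * (2/(m:ℝ)) ^ 2)) ≤ δ := by
    have hε2 : ε ^ 2 = 9 * (L / (2 * m)) := by
      rw [hε, mul_pow, Real.sq_sqrt (by positivity)]
      norm_num
    have harg : -2 * ε ^ 2 / (m * (2/(m:ℝ)) ^ 2) = -(9/4 * L) := by
      rw [hε2]
      field_simp
      ring
    rw [harg]
    have h1 : Real.exp (-(9/4 * L)) ≤ Real.exp (-L) :=
      Real.exp_le_exp.mpr (by linarith)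
    have h2 : Real.exp (-L) = δ / 2 := by
      rw [hL, Real.exp_neg, Real.exp_log (by positivity)]
      rw [inv_div]
    linarith [h1.trans_eq h2]
  have hcompl : probOf μ m {x | ε < Zfun μ m x} ≤ δ := htail.trans hexp
  have hset : ({x : Fin m → ℕ | tvDist (empMeas m x) μ ≤ Phi m (empMeas m x) + ε})ᶜ
      = {x | ε < Zfun μ m x} := by
    ext x
    simp only [Set.mem_compl_iff, Set.mem_setOf_eq, not_le, Zfun]
    constructor
    · intro h; linarith
    · intro h; linarith
  rw [probOf_compl hμ {x | tvDist (empMeas m x) μ ≤ Phi m (empMeas m x) + ε}, hset]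
  linarith
end

section
/- For every m ∈ ℕ and every probability distribution μ on ℕ, the expected total variation risk of the empirical measure is bounded by the expectation of the empirical half-norm statistic: E[‖μ̂_m − μ‖_TV] ≤ E[Φ_m(μ̂_m)], where the expectation is over an i.i.d. sample X = (X_1,...,X_m) ~ μ^m. -/
open scoped BigOperators

section AuxBinom
open Finset

/-- binomial weight -/
noncomputable def bw (p : ℝ) (n k : ℕ) : ℝ := (n.choose k : ℝ) * p ^ k * (1 - p) ^ (n - k)

/-- binomial expectation of `g` -/
noncomputable def Sb (p : ℝ) (n : ℕ) (g : ℕ → ℝ) : ℝ := ∑ k ∈ range (n + 1), bw p n k * g k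

lemma Sb_rec (p : ℝ) (n : ℕ) (g : ℕ → ℝ) :
    Sb p (n + 1) g = p * Sb p n (fun k => g (k + 1)) + (1 - p) * Sb p n g := by
  set q := 1 - p
  have h1 : Sb p (n+1) g
      = (∑ k ∈ range (n+1), (((n+1).choose (k+1) : ℝ) * p ^ (k+1) * q ^ (n - k)) * g (k+1))
        + bw p (n+1) 0 * g 0 := by
    rw [Sb, Finset.sum_range_succ']
    congr 1
    refine Finset.sum_congr rfl fun k hk => ?_
    simp [bw, Nat.succ_sub_succ, q]
  have h2 : ∀ k, ((n+1).choose (k+1) : ℝ) = (n.choose k : ℝ) + (n.choose (k+1) : ℝ) := by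
    intro k
    rw [Nat.choose_succ_succ]
    push_cast; ring
  have h3 : (∑ k ∈ range (n+1), (((n+1).choose (k+1) : ℝ) * p ^ (k+1) * q ^ (n - k)) * g (k+1))
      = (∑ k ∈ range (n+1), ((n.choose k : ℝ) * p ^ (k+1) * q ^ (n - k)) * g (k+1))
        + (∑ k ∈ range (n+1), ((n.choose (k+1) : ℝ) * p ^ (k+1) * q ^ (n - k)) * g (k+1)) := by
    rw [← Finset.sum_add_distrib]
    refine Finset.sum_congr rfl fun k hk => ?_
    rw [h2]; ring
  have h4 : (∑ k ∈ range (n+1), ((n.choose k : ℝ) * p ^ (k+1) * q ^ (n - k)) * g (k+1))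
      = p * Sb p n (fun k => g (k + 1)) := by
    rw [Sb, Finset.mul_sum]
    refine Finset.sum_congr rfl fun k hk => ?_
    simp only [bw]; ring
  have h5 : (∑ k ∈ range (n+1), ((n.choose (k+1) : ℝ) * p ^ (k+1) * q ^ (n - k)) * g (k+1))
        + bw p (n+1) 0 * g 0
      = q * Sb p n g := by
    have e0 : (∑ k ∈ range (n+1), ((n.choose (k+1) : ℝ) * p ^ (k+1) * q ^ (n - k)) * g (k+1))
        = ∑ k ∈ range n, ((n.choose (k+1) : ℝ) * p ^ (k+1) * q ^ (n - k)) * g (k+1) := by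
      rw [Finset.sum_range_succ, Nat.choose_succ_self]
      simp
    rw [e0, Sb, Finset.mul_sum]
    rw [Finset.sum_range_succ']
    congr 1
    · refine Finset.sum_congr rfl fun k hk => ?_
      have hk' : k < n := Finset.mem_range.mp hk
      have : n - k = (n - (k+1)) + 1 := by omega
      rw [bw, this]
      ring
    · have : n - 0 = n := rfl
      simp [bw]
      ring
  linarith [h1, h3, h4, h5]

lemma Sb_one (p : ℝ) (n : ℕ) : Sb p n (fun _ => (1 : ℝ)) = 1 := by
  induction n with
  | zero => simp [Sb, bw]
  | succ n ih => rw [Sb_rec, ih]; ring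

lemma Sb_id (p : ℝ) (n : ℕ) : Sb p n (fun k => (k : ℝ)) = n * p := by
  induction n with
  | zero => simp [Sb, bw]
  | succ n ih =>
    rw [Sb_rec]
    have : Sb p n (fun k => ((k + 1 : ℕ) : ℝ)) = Sb p n (fun k => (k : ℝ) + 1) := by
      refine Finset.sum_congr rfl fun k _ => ?_; push_cast; ring
    rw [this]
    have : Sb p n (fun k => (k : ℝ) + 1)
        = Sb p n (fun k => (k : ℝ)) + Sb p n (fun _ => (1:ℝ)) := by
      simp only [Sb, ← Finset.sum_add_distrib]
      refine Finset.sum_congr rfl fun k _ => ?_; ring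
    rw [this, ih, Sb_one]
    push_cast; ring

lemma Sb_sq (p : ℝ) (n : ℕ) : Sb p n (fun k => (k : ℝ)^2) = n*(n-1)*p^2 + n*p := by
  induction n with
  | zero => simp [Sb, bw]
  | succ n ih =>
    rw [Sb_rec]
    have e1 : Sb p n (fun k => ((k + 1 : ℕ) : ℝ)^2)
        = Sb p n (fun k => (k:ℝ)^2) + 2 * Sb p n (fun k => (k:ℝ)) + Sb p n (fun _ => (1:ℝ)) := by
      simp only [Sb, Finset.mul_sum, ← Finset.sum_add_distrib]
      refine Finset.sum_congr rfl fun k _ => ?_; push_cast; ring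
    rw [e1, ih, Sb_id, Sb_one]
    push_cast; ring


lemma bw_nonneg {p : ℝ} (hp0 : 0 ≤ p) (hp1 : p ≤ 1) (n k : ℕ) : 0 ≤ bw p n k := by
  have h : (0:ℝ) ≤ 1 - p := by linarith
  exact mul_nonneg (mul_nonneg (Nat.cast_nonneg _) (pow_nonneg hp0 _)) (pow_nonneg h _)

lemma Sb_mono {p : ℝ} (hp0 : 0 ≤ p) (hp1 : p ≤ 1) (n : ℕ) {f g : ℕ → ℝ}
    (h : ∀ k, f k ≤ g k) : Sb p n f ≤ Sb p n g :=
  Finset.sum_le_sum fun k _ => mul_le_mul_of_nonneg_left (h k) (bw_nonneg hp0 hp1 n k)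

lemma Sb_nonneg {p : ℝ} (hp0 : 0 ≤ p) (hp1 : p ≤ 1) (n : ℕ) {f : ℕ → ℝ}
    (h : ∀ k, 0 ≤ f k) : 0 ≤ Sb p n f := by
  have := Sb_mono hp0 hp1 n (f := fun _ => 0) (g := f) h
  simpa [Sb] using this

lemma Sb_var {p : ℝ} (n : ℕ) :
    Sb p n (fun k => ((k:ℝ) - n*p)^2) = (n*p) * (1-p) := by
  have e : Sb p n (fun k => ((k:ℝ) - n*p)^2)
      = Sb p n (fun k => (k:ℝ)^2) - 2*(n*p) * Sb p n (fun k => (k:ℝ))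
        + (n*p)^2 * Sb p n (fun _ => (1:ℝ)) := by
    simp only [Sb, Finset.mul_sum, ← Finset.sum_sub_distrib, ← Finset.sum_add_distrib]
    refine Finset.sum_congr rfl fun k _ => ?_; ring
  rw [e, Sb_one, Sb_id, Sb_sq]; ring

/-- Key binomial inequality: `E|B - np| ≤ 2 E√B`. -/
lemma mad_le_sqrt {p : ℝ} (hp0 : 0 ≤ p) (hp1 : p ≤ 1) (m : ℕ) (hm : 0 < m) :
    Sb p m (fun k => |(k:ℝ) - m*p|) ≤ 2 * Sb p m (fun k => Real.sqrt k) := by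
  set lam : ℝ := m * p with hlam
  have hlam0 : 0 ≤ lam := by positivity
  set D : ℝ := Sb p m (fun k => |(k:ℝ) - lam|) with hD
  set S : ℝ := Sb p m (fun k => Real.sqrt k) with hS
  set M : ℝ := Sb p m (fun k => max (lam - (k:ℝ)) 0) with hM
  have hDnn : 0 ≤ D := Sb_nonneg hp0 hp1 m fun k => abs_nonneg _
  have hSnn : 0 ≤ S := Sb_nonneg hp0 hp1 m fun k => Real.sqrt_nonneg _
  -- mean zero
  have hmean : Sb p m (fun k => (k:ℝ) - lam) = 0 := by
    have e : Sb p m (fun k => (k:ℝ) - lam)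
        = Sb p m (fun k => (k:ℝ)) - lam * Sb p m (fun _ => (1:ℝ)) := by
      simp only [Sb, Finset.mul_sum, ← Finset.sum_sub_distrib]
      refine Finset.sum_congr rfl fun k _ => ?_; ring
    rw [e, Sb_one, Sb_id]; ring
  -- D = 2 M
  have hD2M : D = 2 * M := by
    have e : Sb p m (fun k => |(k:ℝ) - lam|)
        = 2 * Sb p m (fun k => max (lam - (k:ℝ)) 0) + Sb p m (fun k => (k:ℝ) - lam) := by
      simp only [Sb, Finset.mul_sum, ← Finset.sum_add_distrib]
      refine Finset.sum_congr rfl fun k _ => ?_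
      rcases le_total lam (k:ℝ) with h | h
      · rw [abs_of_nonneg (by linarith), max_eq_right (by linarith)]; ring
      · rw [abs_of_nonpos (by linarith), max_eq_left (by linarith)]; ring
    rw [hD, e, hmean]; ring
  -- Cauchy-Schwarz: D^2 ≤ lam * (1-p)
  have hCS : D^2 ≤ lam * (1 - p) := by
    have cs := Finset.sum_mul_sq_le_sq_mul_sq (range (m+1))
      (fun k => Real.sqrt (bw p m k)) (fun k => Real.sqrt (bw p m k) * |(k:ℝ) - lam|)
    have e1 : ∀ k ∈ range (m+1),
        Real.sqrt (bw p m k) * (Real.sqrt (bw p m k) * |(k:ℝ) - lam|)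
          = bw p m k * |(k:ℝ) - lam| := by
      intro k _
      rw [← mul_assoc, Real.mul_self_sqrt (bw_nonneg hp0 hp1 m k)]
    have e2 : ∀ k ∈ range (m+1), Real.sqrt (bw p m k) ^ 2 = bw p m k := by
      intro k _; exact Real.sq_sqrt (bw_nonneg hp0 hp1 m k)
    have e3 : ∀ k ∈ range (m+1),
        (Real.sqrt (bw p m k) * |(k:ℝ) - lam|) ^ 2 = bw p m k * ((k:ℝ) - lam)^2 := by
      intro k _
      rw [mul_pow, Real.sq_sqrt (bw_nonneg hp0 hp1 m k), sq_abs]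
    rw [Finset.sum_congr rfl e1, Finset.sum_congr rfl e2, Finset.sum_congr rfl e3] at cs
    have h1 : (∑ k ∈ range (m+1), bw p m k * |(k:ℝ) - lam|) = D := rfl
    have h2 : (∑ k ∈ range (m+1), bw p m k) = 1 := by
      have := Sb_one p m; simpa [Sb] using this
    have h3 : (∑ k ∈ range (m+1), bw p m k * ((k:ℝ) - lam)^2) = lam * (1-p) := Sb_var m
    rw [h1, h2, h3, one_mul] at cs
    exact cs
  have hDle : D ≤ Real.sqrt lam := by
    have h1 : D^2 ≤ lam := le_trans hCS (by nlinarith)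
    exact (Real.le_sqrt hDnn hlam0).mpr h1
  rcases le_or_gt 1 lam with hcase | hcase
  · -- lam ≥ 1
    have hslam : (1:ℝ) ≤ Real.sqrt lam := by
      rw [show (1:ℝ) = Real.sqrt 1 by simp]
      exact Real.sqrt_le_sqrt hcase
    have hslam0 : 0 < Real.sqrt lam := by linarith
    -- pointwise lower bound on sqrt
    have hpw : ∀ k : ℕ, Real.sqrt lam - max (lam - (k:ℝ)) 0 / Real.sqrt lam ≤ Real.sqrt k := by
      intro k
      rcases le_total lam (k:ℝ) with h | h
      · rw [max_eq_right (by linarith), zero_div, sub_zero]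
        exact Real.sqrt_le_sqrt h
      · rw [max_eq_left (by linarith)]
        have hsk : Real.sqrt k * Real.sqrt k = (k:ℝ) := Real.mul_self_sqrt (Nat.cast_nonneg k)
        have hsl : Real.sqrt lam * Real.sqrt lam = lam := Real.mul_self_sqrt hlam0
        have hks : Real.sqrt k ≤ Real.sqrt lam := Real.sqrt_le_sqrt h
        have hne : Real.sqrt lam ≠ 0 := ne_of_gt hslam0
        have e : Real.sqrt lam - (lam - (k:ℝ))/Real.sqrt lam = (k:ℝ) / Real.sqrt lam := by
          rw [eq_div_iff hne, sub_mul, div_mul_cancel₀ _ hne, hsl]; ring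
        rw [e, div_le_iff₀ hslam0]
        nlinarith [Real.sqrt_nonneg (k:ℝ)]
    have hSlow : Real.sqrt lam - M / Real.sqrt lam ≤ S := by
      have e : Sb p m (fun k => Real.sqrt lam - max (lam - (k:ℝ)) 0 / Real.sqrt lam)
          = Real.sqrt lam * Sb p m (fun _ => (1:ℝ))
            - (1 / Real.sqrt lam) * Sb p m (fun k => max (lam - (k:ℝ)) 0) := by
        simp only [Sb, Finset.mul_sum, ← Finset.sum_sub_distrib]
        refine Finset.sum_congr rfl fun k _ => ?_; ring
      have := Sb_mono hp0 hp1 m hpw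
      rw [e, Sb_one] at this
      calc Real.sqrt lam - M / Real.sqrt lam
          = Real.sqrt lam * 1 - 1 / Real.sqrt lam * M := by ring
        _ ≤ S := this
    have hMnn : 0 ≤ M := Sb_nonneg hp0 hp1 m fun k => le_max_right _ _
    have hdd : D / Real.sqrt lam ≤ Real.sqrt lam := by
      rw [div_le_iff₀ hslam0]
      nlinarith
    have : M = D / 2 := by rw [hD2M]; ring
    rw [this] at hSlow
    have : D / 2 / Real.sqrt lam = D / Real.sqrt lam / 2 := by ring
    rw [this] at hSlow
    linarith
  · -- lam < 1
    have hq : (0:ℝ) ≤ 1 - p := by linarith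
    -- M = lam * (1-p)^m
    have hMeq : M = lam * (1-p)^m := by
      rw [hM, Sb]
      rw [Finset.sum_eq_single_of_mem 0 (Finset.mem_range.mpr (Nat.succ_pos m))]
      · simp [bw, max_eq_left hlam0, mul_comm]
      · intro k _ hk0
        have hk1 : (1:ℝ) ≤ k := by
          have : 1 ≤ k := Nat.one_le_iff_ne_zero.mpr hk0
          exact_mod_cast this
        rw [max_eq_right (by linarith), mul_zero]
    -- S ≥ 1 - (1-p)^m
    have hind : Sb p m (fun k => if k = 0 then (0:ℝ) else 1) = 1 - (1-p)^m := by
      have e : Sb p m (fun k => if k = 0 then (0:ℝ) else 1)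
          = Sb p m (fun _ => (1:ℝ)) - Sb p m (fun k => if k = 0 then (1:ℝ) else 0) := by
        simp only [Sb, ← Finset.sum_sub_distrib]
        refine Finset.sum_congr rfl fun k _ => ?_
        by_cases h : k = 0 <;> simp [h]
      have e2 : Sb p m (fun k => if k = 0 then (1:ℝ) else 0) = (1-p)^m := by
        rw [Sb, Finset.sum_eq_single_of_mem 0 (Finset.mem_range.mpr (Nat.succ_pos m))]
        · simp [bw]
        · intro k _ hk0; simp [hk0]
      rw [e, e2, Sb_one]
    have hSge : 1 - (1-p)^m ≤ S := by
      rw [← hind]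
      refine Sb_mono hp0 hp1 m fun k => ?_
      by_cases h : k = 0
      · simp [h]
      · have hk1 : (1:ℕ) ≤ k := Nat.one_le_iff_ne_zero.mpr h
        simp only [h, if_false]
        rw [show (1:ℝ) = Real.sqrt 1 by simp]
        exact Real.sqrt_le_sqrt (by exact_mod_cast hk1)
    -- Bernoulli: (1-p)^m * (1 + m*p) ≤ 1
    have hbern : (1-p)^m * (1 + lam) ≤ 1 := by
      have h1 : 1 + (m:ℝ) * p ≤ (1 + p)^m := one_add_mul_le_pow (by linarith) m
      have h2 : (1-p)^m * (1 + lam) ≤ (1-p)^m * (1+p)^m := by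
        apply mul_le_mul_of_nonneg_left _ (pow_nonneg hq m)
        rw [hlam]; exact h1
      have h3 : (1-p)^m * (1+p)^m = ((1-p)*(1+p))^m := (mul_pow _ _ m).symm
      have h4 : ((1-p)*(1+p))^m ≤ 1 := by
        apply pow_le_one₀ (by nlinarith) (by nlinarith)
      calc (1-p)^m * (1 + lam) ≤ ((1-p)*(1+p))^m := by rw [← h3]; exact h2
        _ ≤ 1 := h4
    have key : lam * (1-p)^m ≤ 1 - (1-p)^m := by nlinarith [pow_nonneg hq m]
    rw [hD2M, hMeq]
    linarith


/-- count of samples equal to i -/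
def cnt (n : ℕ) (i : ℕ) (x : Fin n → ℕ) : ℕ := (Finset.univ.filter (fun t => x t = i)).card

lemma cnt_cons (n i a : ℕ) (y : Fin n → ℕ) :
    cnt (n+1) i (Fin.cons a y) = (if a = i then 1 else 0) + cnt n i y := by
  simp only [cnt, Finset.card_filter]
  rw [Fin.sum_univ_succ]
  simp [Fin.cons_zero, Fin.cons_succ]

theorem binom_red (μ : ℕ → ℝ) (h0 : ∀ j, 0 ≤ μ j) (hsm : Summable μ)
    (h1 : ∑' j, μ j = 1) (i : ℕ) :
    ∀ (n : ℕ) (g : ℕ → ℝ), (∀ k, 0 ≤ g k) →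
      Summable (fun x : Fin n → ℕ => (∏ t, μ (x t)) * g (cnt n i x)) ∧
      ∑' x : Fin n → ℕ, (∏ t, μ (x t)) * g (cnt n i x) = Sb (μ i) n g := by
  have hpi0 : 0 ≤ μ i := h0 i
  have hpi1 : μ i ≤ 1 := by
    have := Summable.le_tsum hsm i (fun j _ => h0 j)
    rw [h1] at this; exact this
  intro n
  induction n with
  | zero =>
    intro g hg
    have huniq : ∀ x : Fin 0 → ℕ, x = (fun t => t.elim0) := by
      intro x; funext t; exact t.elim0
    have hhs : HasSum (fun x : Fin 0 → ℕ => (∏ t, μ (x t)) * g (cnt 0 i x))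
        ((∏ t : Fin 0, μ ((fun t => t.elim0) t)) * g (cnt 0 i (fun t => t.elim0))) := by
      apply hasSum_single
      intro x hx
      exact absurd (huniq x) hx
    refine ⟨hhs.summable, ?_⟩
    rw [hhs.tsum_eq]
    simp [cnt, Sb, bw]
  | succ n IH =>
    intro g hg
    set p := μ i
    set e : ℕ × (Fin n → ℕ) ≃ (Fin (n+1) → ℕ) :=
      Fin.consEquiv (fun _ : Fin (n+1) => ℕ) with he
    set F : (Fin (n+1) → ℕ) → ℝ := fun x => (∏ t, μ (x t)) * g (cnt (n+1) i x) with hF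
    set ga : ℕ → ℕ → ℝ := fun a k => g ((if a = i then 1 else 0) + k) with hga
    have hGval : ∀ a : ℕ, ∀ y : Fin n → ℕ,
        F (e ⟨a, y⟩) = μ a * ((∏ t, μ (y t)) * ga a (cnt n i y)) := by
      intro a y
      have hcons : e ⟨a, y⟩ = Fin.cons a y := by rw [he]; rfl
      rw [hcons, hF]
      simp only [hga]
      rw [cnt_cons, Fin.prod_univ_succ]
      simp only [Fin.cons_zero, Fin.cons_succ]
      ring
    have hga0 : ∀ a k, 0 ≤ ga a k := fun a k => hg _
    have hIHa := fun a => IH (ga a) (hga0 a)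
    set c0 : ℝ := Sb p n g with hc0
    set c1 : ℝ := Sb p n (fun k => g (1 + k)) with hc1
    have hc0nn : 0 ≤ c0 := Sb_nonneg hpi0 hpi1 n hg
    have hc1nn : 0 ≤ c1 := Sb_nonneg hpi0 hpi1 n (fun k => hg _)
    have hSbga : ∀ a, Sb p n (ga a) = if a = i then c1 else c0 := by
      intro a
      by_cases h : a = i <;> simp [hga, h, hc0, hc1]
    -- summability of G over the product
    have hGnn : ∀ z : ℕ × (Fin n → ℕ), 0 ≤ F (e z) := by
      rintro ⟨a, y⟩
      rw [hGval]
      exact mul_nonneg (h0 a) (mul_nonneg (Finset.prod_nonneg fun t _ => h0 _) (hg _))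
    have hslice : ∀ a : ℕ, Summable (fun y : Fin n → ℕ => F (e ⟨a, y⟩)) := by
      intro a
      exact (((hIHa a).1).mul_left (μ a)).congr fun y => (hGval a y).symm
    have htslice : ∀ a : ℕ, ∑' y : Fin n → ℕ, F (e ⟨a, y⟩) = μ a * Sb p n (ga a) := by
      intro a
      rw [tsum_congr fun y => hGval a y, tsum_mul_left, (hIHa a).2]
    have houter : Summable (fun a : ℕ => ∑' y : Fin n → ℕ, F (e ⟨a, y⟩)) := by
      refine Summable.of_nonneg_of_le (fun a => ?_) (fun a => ?_) (hsm.mul_right (c0 + c1))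
      · rw [htslice a]
        exact mul_nonneg (h0 a) (by rw [hSbga a]; split <;> assumption)
      · rw [htslice a, hSbga a]
        apply mul_le_mul_of_nonneg_left _ (h0 a)
        split <;> linarith
    have hG : Summable (fun z : ℕ × (Fin n → ℕ) => F (e z)) := by
      rw [summable_prod_of_nonneg hGnn]
      exact ⟨hslice, houter⟩
    have hFsum : Summable F := (Equiv.summable_iff e).mp hG
    refine ⟨hFsum, ?_⟩
    have htF : ∑' x : Fin (n+1) → ℕ, F x = ∑' z : ℕ × (Fin n → ℕ), F (e z) :=
      (Equiv.tsum_eq e F).symm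
    rw [htF, Summable.tsum_prod' hG hslice]
    have : ∀ a : ℕ, ∑' y : Fin n → ℕ, F (e ⟨a, y⟩) = μ a * (if a = i then c1 else c0) := by
      intro a; rw [htslice a, hSbga a]
    rw [tsum_congr this]
    -- split off a = i
    have hsum2 : Summable (fun a : ℕ => μ a * (if a = i then c1 else c0)) := by
      refine houter.congr fun a => ?_
      rw [htslice a, hSbga a]
    rw [Summable.tsum_eq_add_tsum_ite hsum2 i]
    have hrest : (fun a : ℕ => if a = i then 0 else μ a * (if a = i then c1 else c0))
        = fun a : ℕ => c0 * (if a = i then 0 else μ a) := by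
      funext a
      by_cases h : a = i <;> simp [h, mul_comm]
    rw [hrest, tsum_mul_left]
    have hmu_split : ∑' a : ℕ, (if a = i then 0 else μ a) = 1 - μ i := by
      have := Summable.tsum_eq_add_tsum_ite hsm i
      rw [h1] at this
      linarith
    rw [hmu_split, Sb_rec]
    have : Sb p n (fun k => g (k + 1)) = c1 := by
      rw [hc1]
      exact congrArg (Sb p n) (funext fun k => by rw [Nat.add_comm])
    rw [this]
    simp only [eq_self_iff_true, if_true]
    ring


end AuxBinom

/-- For every `m ∈ ℕ` and probability distribution `μ` on ℕ,
`E[‖μ̂_m - μ‖_TV] ≤ E[Φ_m(μ̂_m)]`. -/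
theorem expected_tv_le_expected_Phi (m : ℕ) (hm : 0 < m) (μ : ℕ → ℝ) (hμ : IsProb μ) :
    expect μ m (fun x => tvDist (empMeas m x) μ) ≤
      expect μ m (fun x => Phi m (empMeas m x)) := by
  obtain ⟨hμ0, hμ1⟩ := hμ
  have hsm : Summable μ := by
    by_contra h
    rw [tsum_eq_zero_of_not_summable h] at hμ1
    norm_num at hμ1
  have hm0 : (0:ℝ) < m := by exact_mod_cast hm
  have hsqm0 : (0:ℝ) < Real.sqrt m := Real.sqrt_pos.mpr hm0
  have hsqmm : Real.sqrt m * Real.sqrt m = (m:ℝ) := Real.mul_self_sqrt hm0.le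
  set A : (Fin m → ℕ) → ℝ := fun x => ∏ t, μ (x t) with hA
  have hAnn : ∀ x, 0 ≤ A x := fun x => Finset.prod_nonneg fun t _ => hμ0 _
  have hAsum : Summable A := by
    have := (binom_red μ hμ0 hsm hμ1 0 m (fun _ => 1) (fun _ => zero_le_one)).1
    exact this.congr fun x => by simp [hA]
  -- empirical measure basics
  have hemp : ∀ x i, empMeas m x i = (cnt m i x : ℝ) / m := fun x i => rfl
  have hempnn : ∀ x i, 0 ≤ empMeas m x i := fun x i => by
    rw [hemp]; positivity
  have hsupp : ∀ (x : Fin m → ℕ) i, i ∉ Finset.image x Finset.univ → empMeas m x i = 0 := by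
    intro x i hi
    rw [hemp, cnt]
    have : Finset.univ.filter (fun t => x t = i) = ∅ := by
      apply Finset.filter_eq_empty_iff.mpr
      intro t _
      intro h
      exact hi (Finset.mem_image.mpr ⟨t, Finset.mem_univ t, h⟩)
    rw [this]; simp
  have hempsummable : ∀ x, Summable (fun i => empMeas m x i) := fun x =>
    summable_of_ne_finset_zero (hsupp x)
  have hcard_sum : ∀ x : Fin m → ℕ,
      ∑ i ∈ Finset.image x Finset.univ, (cnt m i x : ℝ) = m := by
    intro x
    have := Finset.card_eq_sum_card_fiberwise
      (f := x) (s := Finset.univ) (t := Finset.image x Finset.univ)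
      (fun t _ => Finset.mem_image.mpr ⟨t, Finset.mem_univ t, rfl⟩)
    norm_cast
    simp only [cnt]
    rw [← this]
    simp
  have hemptotal : ∀ x, ∑' i, empMeas m x i = 1 := by
    intro x
    rw [tsum_eq_sum (hsupp x)]
    have e : ∑ i ∈ Finset.image x Finset.univ, empMeas m x i
        = (∑ i ∈ Finset.image x Finset.univ, (cnt m i x : ℝ)) / m := by
      rw [Finset.sum_div]
      exact Finset.sum_congr rfl fun i _ => hemp x i
    rw [e, hcard_sum, div_self hm0.ne']
  -- bounds on |emp - mu|
  have habs_le : ∀ x i, |empMeas m x i - μ i| ≤ empMeas m x i + μ i := by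
    intro x i
    rw [abs_sub_le_iff]
    constructor
    · linarith [hμ0 i, hempnn x i]
    · linarith [hμ0 i, hempnn x i]
  have habs_summable : ∀ x, Summable (fun i => |empMeas m x i - μ i|) := fun x =>
    Summable.of_nonneg_of_le (fun i => abs_nonneg _) (fun i => habs_le x i)
      ((hempsummable x).add hsm)
  have habs_tot : ∀ x, ∑' i, |empMeas m x i - μ i| ≤ 2 := by
    intro x
    have h1 : ∑' i, |empMeas m x i - μ i| ≤ ∑' i, (empMeas m x i + μ i) :=
      Summable.tsum_le_tsum (habs_le x) (habs_summable x) ((hempsummable x).add hsm)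
    rw [Summable.tsum_add (hempsummable x) hsm, hemptotal x, hμ1] at h1
    linarith
  have hsqrt_summable : ∀ x, Summable (fun i => Real.sqrt (empMeas m x i)) := by
    intro x
    apply summable_of_ne_finset_zero (s := Finset.image x Finset.univ)
    intro i hi
    rw [hsupp x i hi, Real.sqrt_zero]
  have hsqrt_tot : ∀ x, ∑' i, Real.sqrt (empMeas m x i) ≤ Real.sqrt m := by
    intro x
    have hz : ∀ i ∉ Finset.image x Finset.univ, Real.sqrt (empMeas m x i) = 0 := by
      intro i hi; rw [hsupp x i hi, Real.sqrt_zero]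
    rw [tsum_eq_sum hz]
    have hle : ∀ i ∈ Finset.image x Finset.univ,
        Real.sqrt (empMeas m x i) ≤ (cnt m i x : ℝ) / Real.sqrt m := by
      intro i _
      rw [hemp, Real.sqrt_div (Nat.cast_nonneg _)]
      gcongr
      rcases Nat.eq_zero_or_pos (cnt m i x) with h | h
      · simp [h]
      · have h1 : (1:ℝ) ≤ (cnt m i x : ℝ) := by exact_mod_cast h
        nlinarith [Real.sq_sqrt (show (0:ℝ) ≤ (cnt m i x : ℝ) from Nat.cast_nonneg _),
          Real.sqrt_nonneg ((cnt m i x : ℝ))]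
    calc ∑ i ∈ Finset.image x Finset.univ, Real.sqrt (empMeas m x i)
        ≤ ∑ i ∈ Finset.image x Finset.univ, (cnt m i x : ℝ) / Real.sqrt m :=
          Finset.sum_le_sum hle
      _ = (∑ i ∈ Finset.image x Finset.univ, (cnt m i x : ℝ)) / Real.sqrt m := by
          rw [Finset.sum_div]
      _ = (m : ℝ) / Real.sqrt m := by rw [hcard_sum]
      _ = Real.sqrt m := by
          rw [div_eq_iff hsqm0.ne']
          exact hsqmm.symm
  -- product summability (both kernels)
  have hPprod : Summable (fun z : (Fin m → ℕ) × ℕ => A z.1 * |empMeas m z.1 z.2 - μ z.2|) := by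
    rw [summable_prod_of_nonneg (fun z => mul_nonneg (hAnn _) (abs_nonneg _))]
    constructor
    · exact fun x => (habs_summable x).mul_left (A x)
    · apply Summable.of_nonneg_of_le
        (fun x => tsum_nonneg fun i => mul_nonneg (hAnn _) (abs_nonneg _))
        (fun x => ?_) (hAsum.mul_left 2)
      show (∑' i : ℕ, A x * |empMeas m x i - μ i|) ≤ 2 * A x
      rw [tsum_mul_left]
      calc A x * ∑' i, |empMeas m x i - μ i| ≤ A x * 2 :=
            mul_le_mul_of_nonneg_left (habs_tot x) (hAnn x)
        _ = 2 * A x := by ring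
  have hQprod : Summable (fun z : (Fin m → ℕ) × ℕ => A z.1 * Real.sqrt (empMeas m z.1 z.2)) := by
    rw [summable_prod_of_nonneg (fun z => mul_nonneg (hAnn _) (Real.sqrt_nonneg _))]
    constructor
    · exact fun x => (hsqrt_summable x).mul_left (A x)
    · apply Summable.of_nonneg_of_le
        (fun x => tsum_nonneg fun i => mul_nonneg (hAnn _) (Real.sqrt_nonneg _))
        (fun x => ?_) (hAsum.mul_left (Real.sqrt m))
      show (∑' i : ℕ, A x * Real.sqrt (empMeas m x i)) ≤ Real.sqrt m * A x
      rw [tsum_mul_left]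
      calc A x * ∑' i, Real.sqrt (empMeas m x i) ≤ A x * Real.sqrt m :=
            mul_le_mul_of_nonneg_left (hsqrt_tot x) (hAnn x)
        _ = Real.sqrt m * A x := by ring
  -- per-coordinate expectations via the binomial reduction
  have hEi : ∀ i, ∑' x : Fin m → ℕ, A x * |empMeas m x i - μ i|
      = Sb (μ i) m (fun k => |(k:ℝ)/m - μ i|) := by
    intro i
    have := (binom_red μ hμ0 hsm hμ1 i m (fun k => |(k:ℝ)/m - μ i|)
      (fun k => abs_nonneg _)).2
    rw [← this]
    exact tsum_congr fun x => by rw [hemp]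
  have hFi : ∀ i, ∑' x : Fin m → ℕ, A x * Real.sqrt (empMeas m x i)
      = Sb (μ i) m (fun k => Real.sqrt ((k:ℝ)/m)) := by
    intro i
    have := (binom_red μ hμ0 hsm hμ1 i m (fun k => Real.sqrt ((k:ℝ)/m))
      (fun k => Real.sqrt_nonneg _)).2
    rw [← this]
    exact tsum_congr fun x => by rw [hemp]
  -- key per-coordinate inequality
  have hkey : ∀ i, Sb (μ i) m (fun k => |(k:ℝ)/m - μ i|)
      ≤ (2 / Real.sqrt m) * Sb (μ i) m (fun k => Real.sqrt ((k:ℝ)/m)) := by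
    intro i
    have hp0 : 0 ≤ μ i := hμ0 i
    have hp1 : μ i ≤ 1 := by
      have := Summable.le_tsum hsm i (fun j _ => hμ0 j)
      rw [hμ1] at this; exact this
    have e1 : Sb (μ i) m (fun k => |(k:ℝ)/m - μ i|)
        = (1/m) * Sb (μ i) m (fun k => |(k:ℝ) - m * μ i|) := by
      rw [Sb, Sb, Finset.mul_sum]
      refine Finset.sum_congr rfl fun k _ => ?_
      have : (k:ℝ)/m - μ i = ((k:ℝ) - m * μ i) / m := by field_simp
      rw [this, abs_div, abs_of_pos hm0]
      ring
    have e2 : Sb (μ i) m (fun k => Real.sqrt ((k:ℝ)/m))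
        = (1/Real.sqrt m) * Sb (μ i) m (fun k => Real.sqrt k) := by
      rw [Sb, Sb, Finset.mul_sum]
      refine Finset.sum_congr rfl fun k _ => ?_
      rw [Real.sqrt_div (Nat.cast_nonneg _)]
      ring
    have hmad := mad_le_sqrt hp0 hp1 m hm
    have hSnn : 0 ≤ Sb (μ i) m (fun k => Real.sqrt k) :=
      Sb_nonneg hp0 hp1 m fun k => Real.sqrt_nonneg _
    rw [e1, e2]
    have heq : (2/Real.sqrt m) * ((1/Real.sqrt m) * Sb (μ i) m (fun k => Real.sqrt k))
        = (1/(m:ℝ)) * (2 * Sb (μ i) m (fun k => Real.sqrt k)) := by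
      rw [← hsqmm]
      field_simp
      rw [Real.sqrt_sq hsqm0.le]
    rw [heq]
    exact mul_le_mul_of_nonneg_left hmad (by positivity)
  have hPswap : Summable (fun z : ℕ × (Fin m → ℕ) => A z.2 * |empMeas m z.2 z.1 - μ z.1|) :=
    hPprod.prod_symm.congr fun z => rfl
  have hQswap : Summable (fun z : ℕ × (Fin m → ℕ) => A z.2 * Real.sqrt (empMeas m z.2 z.1)) :=
    hQprod.prod_symm.congr fun z => rfl
  -- summability in i of the per-coordinate expectations
  have hEsummable : Summable (fun i => ∑' x : Fin m → ℕ, A x * |empMeas m x i - μ i|) := by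
    exact ((summable_prod_of_nonneg
      (f := fun z : ℕ × (Fin m → ℕ) => A z.2 * |empMeas m z.2 z.1 - μ z.1|)
      (fun z => mul_nonneg (hAnn _) (abs_nonneg _))).mp hPswap).2
  have hFsummable : Summable (fun i => ∑' x : Fin m → ℕ, A x * Real.sqrt (empMeas m x i)) := by
    exact ((summable_prod_of_nonneg
      (f := fun z : ℕ × (Fin m → ℕ) => A z.2 * Real.sqrt (empMeas m z.2 z.1))
      (fun z => mul_nonneg (hAnn _) (Real.sqrt_nonneg _))).mp hQswap).2
  -- rewrite both expectations as double sums then compare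
  have etv : _root_.expect μ m (fun x => tvDist (empMeas m x) μ)
      = (1/2) * ∑' i, ∑' x : Fin m → ℕ, A x * |empMeas m x i - μ i| := by
    have e1 : ∀ x : Fin m → ℕ, A x * tvDist (empMeas m x) μ
        = (1/2) * ∑' i, A x * |empMeas m x i - μ i| := by
      intro x
      rw [tvDist, tsum_mul_left]
      ring
    calc _root_.expect μ m (fun x => tvDist (empMeas m x) μ)
        = ∑' x : Fin m → ℕ, (1/2) * ∑' i, A x * |empMeas m x i - μ i| :=
          tsum_congr fun x => e1 x
      _ = (1/2) * ∑' x : Fin m → ℕ, ∑' i, A x * |empMeas m x i - μ i| := tsum_mul_left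
      _ = (1/2) * ∑' i, ∑' x : Fin m → ℕ, A x * |empMeas m x i - μ i| := by
          rw [← Summable.tsum_comm' (f := fun (x : Fin m → ℕ) (i : ℕ) => A x * |empMeas m x i - μ i|)
            hPprod (fun x => (habs_summable x).mul_left (A x))
            (fun i => hPswap.prod_factor i)]
  have ephi : _root_.expect μ m (fun x => Phi m (empMeas m x))
      = (1/Real.sqrt m) * ∑' i, ∑' x : Fin m → ℕ, A x * Real.sqrt (empMeas m x i) := by
    have e1 : ∀ x : Fin m → ℕ, A x * Phi m (empMeas m x)
        = (1/Real.sqrt m) * ∑' i, A x * Real.sqrt (empMeas m x i) := by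
      intro x
      rw [Phi, tsum_mul_left]
      ring
    calc _root_.expect μ m (fun x => Phi m (empMeas m x))
        = ∑' x : Fin m → ℕ, (1/Real.sqrt m) * ∑' i, A x * Real.sqrt (empMeas m x i) :=
          tsum_congr fun x => e1 x
      _ = (1/Real.sqrt m) * ∑' x : Fin m → ℕ, ∑' i, A x * Real.sqrt (empMeas m x i) :=
          tsum_mul_left
      _ = (1/Real.sqrt m) * ∑' i, ∑' x : Fin m → ℕ, A x * Real.sqrt (empMeas m x i) := by
          rw [← Summable.tsum_comm' (f := fun (x : Fin m → ℕ) (i : ℕ) => A x * Real.sqrt (empMeas m x i))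
            hQprod (fun x => (hsqrt_summable x).mul_left (A x))
            (fun i => hQswap.prod_factor i)]
  rw [etv, ephi]
  have hstep : ∑' i, ∑' x : Fin m → ℕ, A x * |empMeas m x i - μ i|
      ≤ (2/Real.sqrt m) * ∑' i, ∑' x : Fin m → ℕ, A x * Real.sqrt (empMeas m x i) := by
    rw [← tsum_mul_left]
    apply Summable.tsum_le_tsum _ hEsummable (hFsummable.mul_left _)
    intro i
    rw [hEi, hFi]
    exact hkey i
  calc (1/2) * ∑' i, ∑' x : Fin m → ℕ, A x * |empMeas m x i - μ i|
      ≤ (1/2) * ((2/Real.sqrt m) * ∑' i, ∑' x : Fin m → ℕ, A x * Real.sqrt (empMeas m x i)) := by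
        apply mul_le_mul_of_nonneg_left hstep
        norm_num
    _ = (1/Real.sqrt m) * ∑' i, ∑' x : Fin m → ℕ, A x * Real.sqrt (empMeas m x i) := by
        ring
end

section
/- For every m ∈ ℕ, every δ ∈ (0,1), and every probability distribution μ on ℕ, with probability at least 1 − δ over an i.i.d. sample X = (X_1,...,X_m) ~ μ^m, we have Φ_m(μ̂_m) ≤ 2·Λ_m(μ) + √(log(1/δ)/m). -/
open scoped BigOperators

-- ===== auxiliary lemmas =====

lemma etsum_pi_prod (m : ℕ) (g : ℕ → ENNReal) :
    ∑' x : Fin m → ℕ, ∏ t, g (x t) = (∑' i, g i) ^ m := by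
  induction m with
  | zero =>
      haveI : Unique (Fin 0 → ℕ) := ⟨⟨fun i => i.elim0⟩, fun x => funext fun i => i.elim0⟩
      rw [tsum_eq_single (default : Fin 0 → ℕ) (fun b hb => absurd (Subsingleton.elim b default) hb)]
      simp
  | succ n ih =>
      rw [← (Fin.consEquiv fun _ : Fin (n+1) => ℕ).tsum_eq (fun x => ∏ t, g (x t))]
      have h1 : ∀ p : ℕ × (Fin n → ℕ),
          (∏ t, g (((Fin.consEquiv fun _ : Fin (n+1) => ℕ) p) t)) = g p.1 * ∏ t, g (p.2 t) := by
        intro p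
        rw [Fin.prod_univ_succ]
        simp [Fin.consEquiv]
      rw [tsum_congr h1, ENNReal.tsum_prod (f := fun a (b : Fin n → ℕ) => g a * ∏ t, g (b t))]
      simp_rw [ENNReal.tsum_mul_left (f := fun b : Fin n → ℕ => ∏ t, g (b t))]
      rw [ENNReal.tsum_mul_right, ih, pow_succ, mul_comm]

lemma summable_pi_prod (m : ℕ) (h : ℕ → ℝ) (h0 : ∀ i, 0 ≤ h i) (hs : Summable h) :
    Summable (fun x : Fin m → ℕ => ∏ t, h (x t)) ∧
      ∑' x : Fin m → ℕ, ∏ t, h (x t) = (∑' i, h i) ^ m := by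
  set g : ℕ → ENNReal := fun i => ENNReal.ofReal (h i) with hg
  have hsumg : ∑' i, g i = ENNReal.ofReal (∑' i, h i) :=
    (ENNReal.ofReal_tsum_of_nonneg h0 hs).symm
  have hprod : ∀ x : Fin m → ℕ, (∏ t, g (x t)) = ENNReal.ofReal (∏ t, h (x t)) := by
    intro x
    rw [← ENNReal.ofReal_prod_of_nonneg (fun t _ => h0 (x t))]
  have htop : ∑' x : Fin m → ℕ, ENNReal.ofReal (∏ t, h (x t)) = ENNReal.ofReal ((∑' i, h i) ^ m) := by
    rw [← tsum_congr hprod, etsum_pi_prod, hsumg, ← ENNReal.ofReal_pow (tsum_nonneg h0)]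
  have hne : ∑' x : Fin m → ℕ, ENNReal.ofReal (∏ t, h (x t)) ≠ ⊤ := by
    rw [htop]; exact ENNReal.ofReal_ne_top
  have hF0 : ∀ x : Fin m → ℕ, 0 ≤ ∏ t, h (x t) := fun x => Finset.prod_nonneg fun t _ => h0 (x t)
  have hsum : Summable (fun x : Fin m → ℕ => ∏ t, h (x t)) := by
    have := ENNReal.summable_toReal hne
    simpa [ENNReal.toReal_ofReal, hF0] using this
  refine ⟨hsum, ?_⟩
  have := ENNReal.tsum_toReal_eq (f := fun x : Fin m → ℕ => ENNReal.ofReal (∏ t, h (x t)))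
    (fun a => ENNReal.ofReal_ne_top)
  rw [htop] at this
  have h2 : ∑' (a : Fin m → ℕ), (ENNReal.ofReal (∏ t, h (a t))).toReal
      = ∑' x : Fin m → ℕ, ∏ t, h (x t) := by
    apply tsum_congr; intro a; rw [ENNReal.toReal_ofReal (hF0 a)]
  rw [h2] at this
  rw [← this, ENNReal.toReal_ofReal (pow_nonneg (tsum_nonneg h0) m)]

lemma hoeff_fn {p l : ℝ} (hp0 : 0 ≤ p) (hp1 : p ≤ 1) (hl : 0 ≤ l) :
    1 - p + p * Real.exp l ≤ Real.exp (l * p + l ^ 2 / 8) := by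
  set D : ℝ → ℝ := fun x => 1 - p + p * Real.exp x with hD
  have hDpos : ∀ x, 0 < D x := by
    intro x
    rcases lt_or_eq_of_le hp1 with h | h
    · have : 0 < 1 - p := by linarith
      have : 0 ≤ p * Real.exp x := mul_nonneg hp0 (Real.exp_pos x).le
      simp only [hD]; linarith
    · subst h; simp only [hD]; simpa using Real.exp_pos x
  have hDderiv : ∀ x, HasDerivAt D (p * Real.exp x) x := by
    intro x
    exact ((Real.hasDerivAt_exp x).const_mul p).const_add (1 - p)
  -- f1 is deriv of f
  set f1 : ℝ → ℝ := fun x => p + x / 4 - p * Real.exp x / D x with hf1def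
  set f : ℝ → ℝ := fun x => x * p + x ^ 2 / 8 - Real.log (D x) with hfdef
  have hfderiv : ∀ x, HasDerivAt f (f1 x) x := by
    intro x
    have h1 : HasDerivAt (fun x : ℝ => x * p + x ^ 2 / 8) (p + x / 4) x := by
      have := ((hasDerivAt_id x).mul_const p).add
        (((hasDerivAt_pow 2 x)).div_const 8)
      exact this.congr_deriv (by norm_num; ring)
    have h2 : HasDerivAt (fun x => Real.log (D x)) (p * Real.exp x / D x) x :=
      (hDderiv x).log (hDpos x).ne'
    exact h1.sub h2
  have hf1deriv : ∀ x, HasDerivAt f1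
      (1 / 4 - (p * Real.exp x * D x - p * Real.exp x * (p * Real.exp x)) / (D x) ^ 2) x := by
    intro x
    have h1 : HasDerivAt (fun x : ℝ => p + x / 4) (1 / 4) x := by
      simpa using ((hasDerivAt_id x).div_const 4).const_add p
    have h2 : HasDerivAt (fun x => p * Real.exp x / D x)
        ((p * Real.exp x * D x - p * Real.exp x * (p * Real.exp x)) / (D x) ^ 2) x :=
      ((Real.hasDerivAt_exp x).const_mul p).div (hDderiv x) (hDpos x).ne'
    exact h1.sub h2
  -- f1 deriv nonneg
  have hf1d_nonneg : ∀ x, 0 ≤ 1 / 4 - (p * Real.exp x * D x - p * Real.exp x * (p * Real.exp x)) / (D x) ^ 2 := by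
    intro x
    have hD2 : 0 < (D x) ^ 2 := pow_pos (hDpos x) 2
    rw [sub_nonneg, div_le_iff₀ hD2]
    have hDx : D x = 1 - p + p * Real.exp x := rfl
    nlinarith [sq_nonneg ((1 - p) - p * Real.exp x), mul_nonneg (sub_nonneg.2 hp1) (mul_nonneg hp0 (Real.exp_pos x).le)]
  -- f1 monotone on ℝ
  have hf1mono : Monotone f1 := by
    have : ∀ x, 0 ≤ deriv f1 x := by
      intro x
      rw [(hf1deriv x).deriv]
      exact hf1d_nonneg x
    exact monotone_of_deriv_nonneg (fun x => (hf1deriv x).differentiableAt) this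
  have hf1_zero : f1 0 = 0 := by
    simp only [hf1def, hD]
    simp
  have hf1nonneg : ∀ x, 0 ≤ x → 0 ≤ f1 x := fun x hx => hf1_zero ▸ hf1mono hx
  -- f monotone on [0, ∞)
  have hfmono : MonotoneOn f (Set.Ici 0) := by
    apply monotoneOn_of_deriv_nonneg (convex_Ici 0)
      (fun x _ => (hfderiv x).differentiableAt.continuousAt.continuousWithinAt)
      (fun x _ => ((hfderiv x).differentiableAt).differentiableWithinAt)
    intro x hx
    rw [(hfderiv x).deriv]
    exact hf1nonneg x (le_of_lt (by simpa using hx))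
  have hf0 : f 0 = 0 := by
    simp only [hfdef, hD]
    simp
  have hfl : 0 ≤ f l := hf0 ▸ hfmono (Set.self_mem_Ici) (Set.mem_Ici.2 hl) hl
  have : Real.log (D l) ≤ l * p + l ^ 2 / 8 := by
    simp only [hfdef] at hfl; linarith
  exact (Real.log_le_iff_le_exp (hDpos l)).1 this

noncomputable def wf (m : ℕ) (μ : ℕ → ℝ) (i : ℕ) : ℝ :=
  if μ i < 1 / (m : ℝ) then 1 else 1 / (2 * Real.sqrt (m * μ i))

section aux
variable {m : ℕ} {μ : ℕ → ℝ}

section aux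
variable {m : ℕ} {μ : ℕ → ℝ}

lemma wf_nonneg (i : ℕ) : 0 ≤ wf m μ i := by
  unfold wf; split
  · norm_num
  · positivity

lemma one_le_sqrt_mul (hm : 0 < m) {i : ℕ} (hi : ¬ μ i < 1 / (m : ℝ)) :
    1 ≤ Real.sqrt ((m : ℝ) * μ i) := by
  have hmR : (0 : ℝ) < m := by exact_mod_cast hm
  have h1 : 1 / (m : ℝ) ≤ μ i := le_of_not_gt hi
  have h2 : (1 : ℝ) ≤ (m : ℝ) * μ i := by
    rw [div_le_iff₀ hmR] at h1; linarith
  calc (1:ℝ) = Real.sqrt 1 := by simp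
  _ ≤ Real.sqrt ((m:ℝ) * μ i) := Real.sqrt_le_sqrt h2

lemma wf_le_one (hm : 0 < m) (i : ℕ) : wf m μ i ≤ 1 := by
  unfold wf; split
  · exact le_refl 1
  · rename_i h
    have h2 := one_le_sqrt_mul hm h
    rw [div_le_one (by linarith)]
    linarith

lemma summable_indH (hm : 0 < m) (hμ0 : ∀ i, 0 ≤ μ i) (hμs : Summable μ) :
    Summable (Set.indicator {j | 1 / (m : ℝ) ≤ μ j} (fun j => Real.sqrt (μ j))) := by
  refine Summable.of_nonneg_of_le
    (fun j => Set.indicator_nonneg (fun j _ => Real.sqrt_nonneg _) j)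
    (fun j => ?_) (hμs.mul_left (Real.sqrt m))
  by_cases hj : j ∈ {j | 1 / (m : ℝ) ≤ μ j}
  · rw [Set.indicator_of_mem hj]
    have h1 : 1 ≤ Real.sqrt ((m : ℝ) * μ j) := one_le_sqrt_mul hm (not_lt.2 hj)
    have h2 : Real.sqrt ((m:ℝ) * μ j) = Real.sqrt m * Real.sqrt (μ j) :=
      Real.sqrt_mul (by positivity) _
    calc Real.sqrt (μ j) = 1 * Real.sqrt (μ j) := (one_mul _).symm
    _ ≤ Real.sqrt ((m:ℝ) * μ j) * Real.sqrt (μ j) := by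
        apply mul_le_mul_of_nonneg_right h1 (Real.sqrt_nonneg _)
    _ = Real.sqrt m * (Real.sqrt (μ j) * Real.sqrt (μ j)) := by rw [h2]; ring
    _ = Real.sqrt m * μ j := by rw [Real.mul_self_sqrt (hμ0 j)]
  · rw [Set.indicator_of_notMem hj]
    have : 0 ≤ μ j := hμ0 j
    positivity

/-- The deterministic bound. -/
lemma det_bound (hm : 0 < m) (hμ0 : ∀ i, 0 ≤ μ i) (hμs : Summable μ) (x : Fin m → ℕ) :
    Phi m (empMeas m x) ≤ (1 / (m : ℝ)) * ∑ t, wf m μ (x t)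
      + (1 / (2 * Real.sqrt m)) *
        ∑' j, Set.indicator {j | 1 / (m : ℝ) ≤ μ j} (fun j => Real.sqrt (μ j)) j := by
  classical
  have hmR : (0 : ℝ) < m := by exact_mod_cast hm
  have hsm : 0 < Real.sqrt m := Real.sqrt_pos.2 hmR
  have hss : Real.sqrt m * Real.sqrt m = (m : ℝ) := Real.mul_self_sqrt hmR.le
  set S : Finset ℕ := Finset.image x Finset.univ with hS
  set c : ℕ → ℕ := fun j => (Finset.univ.filter (fun t => x t = j)).card with hc
  set H : Set ℕ := {j | 1 / (m : ℝ) ≤ μ j} with hH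
  have h0 : ∀ j ∉ S, Real.sqrt (empMeas m x j) = 0 := by
    intro j hj
    have he : (Finset.univ.filter (fun t => x t = j)) = ∅ := by
      apply Finset.filter_eq_empty_iff.2
      intro t _ h
      exact hj (Finset.mem_image.2 ⟨t, Finset.mem_univ t, h⟩)
    simp [empMeas, he]
  have h1 : Phi m (empMeas m x) = (1 / (m : ℝ)) * ∑ j ∈ S, Real.sqrt (c j) := by
    rw [Phi, tsum_eq_sum h0, Finset.mul_sum, Finset.mul_sum]
    apply Finset.sum_congr rfl
    intro j _
    rw [empMeas, Real.sqrt_div (by positivity)]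
    rw [div_mul_div_comm, one_mul, hss, one_div, inv_mul_eq_div]
  -- termwise bound
  have key : ∀ j ∈ S, Real.sqrt (c j) ≤ (c j : ℝ) * wf m μ j
      + H.indicator (fun j => Real.sqrt ((m : ℝ) * μ j) / 2) j := by
    intro j _
    by_cases hj : μ j < 1 / (m : ℝ)
    · have hind : H.indicator (fun j => Real.sqrt ((m : ℝ) * μ j) / 2) j = 0 := by
        apply Set.indicator_of_notMem
        simpa [hH] using hj
      rw [hind, wf, if_pos hj, mul_one, add_zero]
      rcases Nat.eq_zero_or_pos (c j) with h | h
      · simp [h]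
      · have h1 : (1:ℝ) ≤ (c j : ℝ) := by exact_mod_cast h
        have h2 : Real.sqrt (c j) ≤ Real.sqrt ((c j : ℝ) * (c j : ℝ)) := by
          apply Real.sqrt_le_sqrt; nlinarith
        rwa [Real.sqrt_mul_self (by positivity)] at h2
    · have hind : H.indicator (fun j => Real.sqrt ((m : ℝ) * μ j) / 2) j
          = Real.sqrt ((m : ℝ) * μ j) / 2 := by
        apply Set.indicator_of_mem
        simpa [hH] using not_lt.1 hj
      rw [hind, wf, if_neg hj]
      set s := Real.sqrt ((m : ℝ) * μ j) with hsdef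
      have hs1 : 1 ≤ s := one_le_sqrt_mul hm hj
      have hs0 : 0 < s := by linarith
      have hcs : Real.sqrt (c j) * Real.sqrt (c j) = (c j : ℝ) := Real.mul_self_sqrt (by positivity)
      have hsq : (Real.sqrt (c j) - s)^2 ≥ 0 := sq_nonneg _
      have h2s : 2 * s * Real.sqrt (c j) ≤ (c j : ℝ) + s^2 := by nlinarith
      have : (c j : ℝ) * (1 / (2 * s)) + s / 2 = ((c j : ℝ) + s^2) / (2 * s) := by
        field_simp
      rw [this, le_div_iff₀ (by linarith)]
      linarith
  have hsum1 : ∑ j ∈ S, Real.sqrt (c j) ≤ ∑ j ∈ S, ((c j : ℝ) * wf m μ j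
      + H.indicator (fun j => Real.sqrt ((m : ℝ) * μ j) / 2) j) :=
    Finset.sum_le_sum key
  -- fiberwise sum
  have hfib : ∑ j ∈ S, (c j : ℝ) * wf m μ j = ∑ t, wf m μ (x t) := by
    rw [← Finset.sum_fiberwise_of_maps_to (g := x) (t := S)
      (fun t _ => Finset.mem_image.2 ⟨t, Finset.mem_univ t, rfl⟩) (fun t => wf m μ (x t))]
    apply Finset.sum_congr rfl
    intro j _
    have : ∀ t ∈ Finset.univ.filter (fun t => x t = j), wf m μ (x t) = wf m μ j := by
      intro t ht
      rw [(Finset.mem_filter.1 ht).2]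
    rw [Finset.sum_congr rfl this, Finset.sum_const, nsmul_eq_mul]
  -- indicator sums
  have hind2 : ∀ j, H.indicator (fun j => Real.sqrt ((m : ℝ) * μ j) / 2) j
      = (Real.sqrt m / 2) * H.indicator (fun j => Real.sqrt (μ j)) j := by
    intro j
    by_cases hj : j ∈ H
    · rw [Set.indicator_of_mem hj, Set.indicator_of_mem hj,
        Real.sqrt_mul hmR.le]
      ring
    · rw [Set.indicator_of_notMem hj, Set.indicator_of_notMem hj, mul_zero]
  have hindle : ∑ j ∈ S, H.indicator (fun j => Real.sqrt (μ j)) j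
      ≤ ∑' j, H.indicator (fun j => Real.sqrt (μ j)) j :=
    Summable.sum_le_tsum S (fun j _ => Set.indicator_nonneg (fun j _ => Real.sqrt_nonneg _) j)
      (summable_indH hm hμ0 hμs)
  -- put together
  rw [h1]
  have step : (1 / (m : ℝ)) * ∑ j ∈ S, Real.sqrt (c j)
      ≤ (1 / (m : ℝ)) * (∑ t, wf m μ (x t)
        + (Real.sqrt m / 2) * ∑' j, H.indicator (fun j => Real.sqrt (μ j)) j) := by
    apply mul_le_mul_of_nonneg_left _ (by positivity)
    calc ∑ j ∈ S, Real.sqrt (c j)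
        ≤ ∑ j ∈ S, ((c j : ℝ) * wf m μ j
          + H.indicator (fun j => Real.sqrt ((m : ℝ) * μ j) / 2) j) := hsum1
      _ = ∑ t, wf m μ (x t) + ∑ j ∈ S, H.indicator (fun j => Real.sqrt ((m : ℝ) * μ j) / 2) j := by
          rw [Finset.sum_add_distrib, hfib]
      _ = ∑ t, wf m μ (x t) + (Real.sqrt m / 2) * ∑ j ∈ S, H.indicator (fun j => Real.sqrt (μ j)) j := by
          rw [Finset.sum_congr rfl (fun j _ => hind2 j), ← Finset.mul_sum]
      _ ≤ ∑ t, wf m μ (x t) + (Real.sqrt m / 2) * ∑' j, H.indicator (fun j => Real.sqrt (μ j)) j := by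
          have := mul_le_mul_of_nonneg_left hindle (by positivity : (0:ℝ) ≤ Real.sqrt m / 2)
          linarith
  refine step.trans (le_of_eq ?_)
  rw [mul_add]
  congr 1
  rw [← mul_assoc]
  congr 1
  rw [← hss]
  field_simp
  rw [Real.sqrt_sq hsm.le]

lemma summable_muw (hm : 0 < m) (hμ0 : ∀ i, 0 ≤ μ i) (hμs : Summable μ) :
    Summable (fun i => μ i * wf m μ i) :=
  Summable.of_nonneg_of_le (fun i => mul_nonneg (hμ0 i) (wf_nonneg i))
    (fun i => mul_le_of_le_one_right (hμ0 i) (wf_le_one hm i)) hμs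

lemma muw_eq (hm : 0 < m) (hμ0 : ∀ i, 0 ≤ μ i) (i : ℕ) :
    μ i * wf m μ i = Set.indicator {j | μ j < 1 / (m : ℝ)} μ i
      + (1 / (2 * Real.sqrt m)) *
        Set.indicator {j | 1 / (m : ℝ) ≤ μ j} (fun j => Real.sqrt (μ j)) i := by
  have hmR : (0 : ℝ) < m := by exact_mod_cast hm
  have hsm : 0 < Real.sqrt m := Real.sqrt_pos.2 hmR
  by_cases hi : μ i < 1 / (m : ℝ)
  · rw [wf, if_pos hi, Set.indicator_of_mem (by simpa using hi),
      Set.indicator_of_notMem (by simpa using hi), mul_zero, mul_one, add_zero]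
  · rw [wf, if_neg hi, Set.indicator_of_notMem (by simpa using hi),
      Set.indicator_of_mem (by simpa using not_lt.1 hi), zero_add]
    have hμpos : 0 < μ i := lt_of_lt_of_le (by positivity) (not_lt.1 hi)
    have hsμ : 0 < Real.sqrt (μ i) := Real.sqrt_pos.2 hμpos
    have hmu : Real.sqrt (μ i) * Real.sqrt (μ i) = μ i := Real.mul_self_sqrt hμpos.le
    rw [Real.sqrt_mul hmR.le]
    field_simp
    nlinarith [hmu, hsμ, hsm]

lemma M_eq_Lam (hm : 0 < m) (hμ0 : ∀ i, 0 ≤ μ i) (hμs : Summable μ) :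
    ∑' i, μ i * wf m μ i = Lam m μ := by
  rw [tsum_congr (muw_eq hm hμ0), Summable.tsum_add (hμs.indicator _)
    (((summable_indH hm hμ0 hμs)).mul_left _), tsum_mul_left, Lam]

lemma mgf_bound (hm : 0 < m) (hμ0 : ∀ i, 0 ≤ μ i) (hμs : Summable μ)
    (hμ1 : ∑' i, μ i = 1) {l : ℝ} (hl : 0 ≤ l) :
    ∑' i, μ i * Real.exp (l * wf m μ i)
      ≤ Real.exp (l * (∑' i, μ i * wf m μ i) + l ^ 2 / 8) := by
  set M := ∑' i, μ i * wf m μ i with hM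
  have hsmuw := summable_muw hm hμ0 hμs
  have hM0 : 0 ≤ M := tsum_nonneg (fun i => mul_nonneg (hμ0 i) (wf_nonneg i))
  have hM1 : M ≤ 1 := by
    rw [← hμ1]
    exact Summable.tsum_le_tsum (fun i => mul_le_of_le_one_right (hμ0 i) (wf_le_one hm i)) hsmuw hμs
  have hpt : ∀ i, μ i * Real.exp (l * wf m μ i)
      ≤ μ i + (Real.exp l - 1) * (μ i * wf m μ i) := by
    intro i
    have hw0 := wf_nonneg (m := m) (μ := μ) i
    have hw1 := wf_le_one hm (μ := μ) i
    have hcx := convexOn_exp.2 (Set.mem_univ (0:ℝ)) (Set.mem_univ l)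
      (sub_nonneg.2 hw1) hw0 (by ring)
    simp only [smul_eq_mul, mul_zero, zero_add, Real.exp_zero, mul_one] at hcx
    have h2 : Real.exp (l * wf m μ i) ≤ 1 - wf m μ i + wf m μ i * Real.exp l := by
      rw [mul_comm]; linarith
    have h3 := mul_le_mul_of_nonneg_left h2 (hμ0 i)
    calc μ i * Real.exp (l * wf m μ i)
        ≤ μ i * (1 - wf m μ i + wf m μ i * Real.exp l) := h3
      _ = μ i + (Real.exp l - 1) * (μ i * wf m μ i) := by ring
  have hlsum : Summable (fun i => μ i * Real.exp (l * wf m μ i)) := by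
    refine Summable.of_nonneg_of_le
      (fun i => mul_nonneg (hμ0 i) (Real.exp_pos _).le) (fun i => ?_)
      (hμs.mul_right (Real.exp l))
    exact mul_le_mul_of_nonneg_left
      (Real.exp_le_exp.2 (by nlinarith [wf_le_one hm (μ := μ) i])) (hμ0 i)
  have hrsum : Summable (fun i => μ i + (Real.exp l - 1) * (μ i * wf m μ i)) :=
    hμs.add (hsmuw.mul_left _)
  have h4 := Summable.tsum_le_tsum hpt hlsum hrsum
  have h5 : ∑' i, (μ i + (Real.exp l - 1) * (μ i * wf m μ i))
      = 1 - M + M * Real.exp l := by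
    rw [Summable.tsum_add hμs (hsmuw.mul_left _), tsum_mul_left, hμ1, ← hM]; ring
  rw [h5] at h4
  exact h4.trans (hoeff_fn hM0 hM1 hl)

end aux


section prob
variable {m : ℕ} {μ : ℕ → ℝ}

lemma prodf_nonneg (hμ0 : ∀ i, 0 ≤ μ i) (x : Fin m → ℕ) :
    0 ≤ ∏ t, μ (x t) := Finset.prod_nonneg fun t _ => hμ0 (x t)

lemma summable_ind (hμ0 : ∀ i, 0 ≤ μ i) (hμs : Summable μ) (A : Set (Fin m → ℕ)) :
    Summable (Set.indicator A (fun y : Fin m → ℕ => ∏ t, μ (y t))) := by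
  refine Summable.of_nonneg_of_le
    (fun x => Set.indicator_nonneg (fun x _ => prodf_nonneg hμ0 x) x)
    (fun x => Set.indicator_le_self' (fun x _ => prodf_nonneg hμ0 x) x)
    (summable_pi_prod m μ hμ0 hμs).1

lemma probOf_nonneg (hμ0 : ∀ i, 0 ≤ μ i) (A : Set (Fin m → ℕ)) :
    0 ≤ probOf μ m A :=
  tsum_nonneg (fun x => Set.indicator_nonneg (fun x _ => prodf_nonneg hμ0 x) x)

lemma probOf_mono (hμ0 : ∀ i, 0 ≤ μ i) (hμs : Summable μ) {A B : Set (Fin m → ℕ)}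
    (hAB : A ⊆ B) : probOf μ m A ≤ probOf μ m B :=
  Summable.tsum_le_tsum
    (fun x => Set.indicator_le_indicator_of_subset hAB
      (fun x => prodf_nonneg hμ0 x) x)
    (summable_ind hμ0 hμs A) (summable_ind hμ0 hμs B)

lemma probOf_add_compl (hμ0 : ∀ i, 0 ≤ μ i) (hμs : Summable μ) (hμ1 : ∑' i, μ i = 1)
    (A : Set (Fin m → ℕ)) : probOf μ m A + probOf μ m Aᶜ = 1 := by
  rw [probOf, probOf, ← Summable.tsum_add (summable_ind hμ0 hμs A) (summable_ind hμ0 hμs Aᶜ)]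
  have h1 : ∀ x : Fin m → ℕ,
      Set.indicator A (fun y : Fin m → ℕ => ∏ t, μ (y t)) x
        + Set.indicator Aᶜ (fun y : Fin m → ℕ => ∏ t, μ (y t)) x = ∏ t, μ (x t) := by
    intro x
    exact congrFun (Set.indicator_self_add_compl A (fun y : Fin m → ℕ => ∏ t, μ (y t))) x
  rw [tsum_congr h1, (summable_pi_prod m μ hμ0 hμs).2, hμ1, one_pow]

end prob

-- main theorem

/-- For every `m ∈ ℕ`, `δ ∈ (0,1)` and probability distribution `μ` on ℕ,
with probability at least `1 - δ` over `X ~ μ^m`,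
`Φ_m(μ̂_m) ≤ 2 Λ_m(μ) + √(log(1/δ)/m)`. -/
theorem Phi_le_two_Lam_high_prob (m : ℕ) (hm : 0 < m) (δ : ℝ) (hδ0 : 0 < δ) (hδ1 : δ < 1)
    (μ : ℕ → ℝ) (hμ : IsProb μ) :
    1 - δ ≤ probOf μ m {x |
      Phi m (empMeas m x) ≤ 2 * Lam m μ + Real.sqrt (Real.log (1 / δ) / m)} := by
  obtain ⟨hμ0, hμ1⟩ := hμ
  have hμs : Summable μ := by
    by_contra h
    rw [tsum_eq_zero_of_not_summable h] at hμ1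
    norm_num at hμ1
  have hmR : (0 : ℝ) < m := by exact_mod_cast hm
  set ε := Real.sqrt (Real.log (1 / δ) / m) with hεdef
  have hlog : 0 < Real.log (1 / δ) := Real.log_pos (one_lt_one_div hδ0 hδ1)
  have hε : 0 < ε := Real.sqrt_pos.2 (div_pos hlog hmR)
  have hε2 : ε ^ 2 = Real.log (1 / δ) / m := Real.sq_sqrt (div_pos hlog hmR).le
  set M := ∑' i, μ i * wf m μ i with hMdef
  have hML : M = Lam m μ := M_eq_Lam hm hμ0 hμs
  set B : Set (Fin m → ℕ) := {x | ∑ t, wf m μ (x t) ≤ m * (M + ε)} with hBdef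
  -- B is included in the target event
  have hBsub : B ⊆ {x | Phi m (empMeas m x)
      ≤ 2 * Lam m μ + Real.sqrt (Real.log (1 / δ) / m)} := by
    intro x hx
    have hdet := det_bound hm hμ0 hμs x
    have hHle : (1 / (2 * Real.sqrt m)) *
        ∑' j, Set.indicator {j | 1 / (m : ℝ) ≤ μ j} (fun j => Real.sqrt (μ j)) j
          ≤ Lam m μ := by
      rw [Lam]
      have : 0 ≤ ∑' j, Set.indicator {j | μ j < 1 / (m : ℝ)} μ j :=
        tsum_nonneg (fun j => Set.indicator_nonneg (fun j _ => hμ0 j) j)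
      linarith
    have hwsum : (1 / (m : ℝ)) * ∑ t, wf m μ (x t) ≤ M + ε := by
      have hx' : ∑ t, wf m μ (x t) ≤ m * (M + ε) := hx
      rw [one_div, inv_mul_le_iff₀ hmR]
      linarith
    have : Phi m (empMeas m x) ≤ (M + ε) + Lam m μ := by linarith
    rw [Set.mem_setOf_eq]
    rw [hML] at this
    linarith
  -- Chernoff bound for the complement
  have hcompl : probOf μ m Bᶜ ≤ δ := by
    set l := 4 * ε with hldef
    have hl0 : 0 ≤ l := by positivity
    have ha0 : 0 ≤ M + ε := by
      have : 0 ≤ M := tsum_nonneg (fun i => mul_nonneg (hμ0 i) (wf_nonneg i))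
      linarith
    set h : ℕ → ℝ := fun i => μ i * Real.exp (l * (wf m μ i - (M + ε))) with hhdef
    have hh0 : ∀ i, 0 ≤ h i := fun i => mul_nonneg (hμ0 i) (Real.exp_pos _).le
    have hhs : Summable h := by
      refine Summable.of_nonneg_of_le hh0 (fun i => ?_) (hμs.mul_right (Real.exp l))
      refine mul_le_mul_of_nonneg_left (Real.exp_le_exp.2 ?_) (hμ0 i)
      have := wf_le_one hm (μ := μ) i
      nlinarith
    obtain ⟨hps, hpt⟩ := summable_pi_prod m h hh0 hhs
    -- termwise bound
    have hterm : ∀ x : Fin m → ℕ,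
        Set.indicator Bᶜ (fun y : Fin m → ℕ => ∏ t, μ (y t)) x ≤ ∏ t, h (x t) := by
      intro x
      by_cases hx : x ∈ Bᶜ
      · rw [Set.indicator_of_mem hx]
        have hexp : (∏ t, h (x t)) = (∏ t, μ (x t))
            * Real.exp (∑ t, l * (wf m μ (x t) - (M + ε))) := by
          rw [Real.exp_sum, ← Finset.prod_mul_distrib]
        have hgt : (0:ℝ) ≤ ∑ t, l * (wf m μ (x t) - (M + ε)) := by
          have hx' : ¬ (∑ t, wf m μ (x t) ≤ m * (M + ε)) := hx
          push_neg at hx'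
          have : ∑ t, l * (wf m μ (x t) - (M + ε))
              = l * ((∑ t, wf m μ (x t)) - m * (M + ε)) := by
            rw [← Finset.mul_sum, Finset.sum_sub_distrib, Finset.sum_const,
              Finset.card_univ, Fintype.card_fin, nsmul_eq_mul]
          rw [this]
          have := le_of_lt hx'
          nlinarith [hx']
        rw [hexp]
        nth_rewrite 1 [← mul_one (∏ t, μ (x t))]
        exact mul_le_mul_of_nonneg_left (Real.one_le_exp hgt) (prodf_nonneg hμ0 x)
      · rw [Set.indicator_of_notMem hx]
        exact Finset.prod_nonneg fun t _ => hh0 (x t)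
    have h1 : probOf μ m Bᶜ ≤ (∑' i, h i) ^ m := by
      rw [probOf, ← hpt]
      exact Summable.tsum_le_tsum hterm (summable_ind hμ0 hμs Bᶜ) hps
    -- bound on ∑' h
    have h2 : ∑' i, h i ≤ Real.exp (-(2 * ε ^ 2)) := by
      have hsplit : ∀ i, h i = (μ i * Real.exp (l * wf m μ i)) * Real.exp (-(l * (M + ε))) := by
        intro i
        rw [hhdef]
        rw [mul_assoc, ← Real.exp_add]
        ring_nf
      rw [tsum_congr hsplit, tsum_mul_right]
      have hmgf := mgf_bound hm hμ0 hμs hμ1 hl0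
      rw [← hMdef] at hmgf
      calc (∑' i, μ i * Real.exp (l * wf m μ i)) * Real.exp (-(l * (M + ε)))
          ≤ Real.exp (l * M + l ^ 2 / 8) * Real.exp (-(l * (M + ε))) := by
            exact mul_le_mul_of_nonneg_right hmgf (Real.exp_pos _).le
        _ = Real.exp (l * M + l ^ 2 / 8 - l * (M + ε)) := by rw [← Real.exp_add]; ring_nf
        _ = Real.exp (-(2 * ε ^ 2)) := by
            congr 1
            rw [hldef]
            ring
    have h3 : (∑' i, h i) ^ m ≤ Real.exp (-(2 * ε ^ 2)) ^ m :=
      pow_le_pow_left₀ (tsum_nonneg hh0) h2 m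
    have h4 : Real.exp (-(2 * ε ^ 2)) ^ m = Real.exp (-(2 * Real.log (1 / δ))) := by
      rw [← Real.exp_nat_mul]
      congr 1
      have : (m : ℝ) * ε ^ 2 = Real.log (1 / δ) := by
        rw [hε2]
        field_simp
      nlinarith [this]
    have h5 : Real.exp (-(2 * Real.log (1 / δ))) = δ ^ 2 := by
      rw [show -(2 * Real.log (1 / δ)) = -Real.log (1/δ) + -Real.log (1/δ) by ring,
        Real.exp_add, Real.exp_neg, Real.exp_log (by positivity), one_div, inv_inv]
      ring
    have h6 : δ ^ 2 ≤ δ := by nlinarith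
    calc probOf μ m Bᶜ ≤ (∑' i, h i) ^ m := h1
      _ ≤ Real.exp (-(2 * ε ^ 2)) ^ m := h3
      _ = δ ^ 2 := by rw [h4, h5]
      _ ≤ δ := h6
  have hmono := probOf_mono hμ0 hμs hBsub
  have hadd := probOf_add_compl hμ0 hμs hμ1 B
  linarith
end aux
end
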